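/- arXiv:1506.03050 — 7 statements merged into one kernel-verified Lean document; each statement's English description precedes it below -/
import Mathlib

section
/- The coefficients $w_g$ of the power series $\prod_{r \ge 1}(1+q^r)^{-e} \cdot \prod_{s \ge 1}(1-q^{2s})^{-(24-e)/2}$ with $e < 0$ even form a strictly increasing sequence: $w_1 < w_2 < w_3 < \dots$, with $w_1 = -e$. -/
open PowerSeries Finset

/-- Integer power of a power series over `ℚ`, using the power-series inverse
for negative exponents. -/
noncomputable def zp (f : PowerSeries ℚ) (n : ℤ) : PowerSeries ℚ :=
  if 0 ≤ n then f ^ n.toNat else f⁻¹ ^ (-n).toNat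

/-- The coefficient `w_g` of `∏_{r ≥ 1} (1+q^r)^{-e} · ∏_{s ≥ 1} (1-q^{2s})^{-(24-e)/2}`.
Since each factor with index `> g` is `1 + O(q^{g+1})`, the coefficient of `q^g`
equals that of the product truncated at index `g`. -/
noncomputable def W (e : ℤ) (g : ℕ) : ℚ :=
  PowerSeries.coeff (R := ℚ) g
    ((∏ r ∈ Icc 1 g, zp (1 + PowerSeries.X ^ r) (-e)) *
     (∏ s ∈ Icc 1 g, zp (1 - PowerSeries.X ^ (2 * s)) (-((24 - e) / 2))))

/-- The coefficient `c_g` of the Yau–Zaslow series `∏_{s ≥ 1} (1-q^s)^{-24}`. -/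
noncomputable def C (g : ℕ) : ℚ :=
  PowerSeries.coeff (R := ℚ) g (∏ s ∈ Icc 1 g, ((1 - PowerSeries.X ^ s)⁻¹) ^ 24)


/-- Geometric-type series: indicator of multiples of `n`. -/
noncomputable def Sgeo (n : ℕ) : PowerSeries ℚ :=
  PowerSeries.mk fun k => if n ∣ k then 1 else 0

lemma coeff_Sgeo (n k : ℕ) : coeff (R := ℚ) k (Sgeo n) = if n ∣ k then 1 else 0 :=
  coeff_mk _ _

lemma coeff_Sgeo_one (k : ℕ) : coeff (R := ℚ) k (Sgeo 1) = 1 := by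
  simp [coeff_Sgeo]

lemma constantCoeff_Sgeo (n : ℕ) : constantCoeff (R := ℚ) (Sgeo n) = 1 := by
  rw [← coeff_zero_eq_constantCoeff, coeff_Sgeo]; simp

lemma one_sub_X_pow_mul_Sgeo (n : ℕ) (hn : 0 < n) :
    (1 - X ^ n) * Sgeo n = 1 := by
  ext k
  rw [sub_mul, one_mul, map_sub]
  rcases lt_or_ge k n with h | h
  · rw [coeff_X_pow_mul' (p := Sgeo n)]
    rcases Nat.eq_zero_or_pos k with rfl | hk
    · simp [coeff_Sgeo, hn.ne']
    · have hnd : ¬ n ∣ k := fun hd => absurd (Nat.le_of_dvd hk hd) (not_le.mpr h)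
      simp [coeff_Sgeo, hnd, coeff_one, hk.ne']
      omega
  · obtain ⟨d, rfl⟩ := Nat.exists_eq_add_of_le h
    rw [add_comm n d, coeff_X_pow_mul]
    have hk : ¬ (n + d = 0) := by omega
    simp [coeff_Sgeo, coeff_one, Nat.dvd_add_self_right, add_comm d n, hk]
    omega

lemma inv_one_sub_X_pow (n : ℕ) (hn : 0 < n) :
    (1 - X ^ n : PowerSeries ℚ)⁻¹ = Sgeo n := by
  have hc : constantCoeff (R := ℚ) (1 - X ^ n) ≠ 0 := by
    rw [map_sub, map_one, map_pow, constantCoeff_X]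
    simp [zero_pow hn.ne']
  rw [PowerSeries.inv_eq_iff_mul_eq_one hc, mul_comm]
  exact one_sub_X_pow_mul_Sgeo n hn

/-- All coefficients nonnegative. -/
def NN (f : PowerSeries ℚ) : Prop := ∀ n, 0 ≤ coeff (R := ℚ) n f

lemma NN_one : NN 1 := fun n => by
  rw [coeff_one]; positivity

lemma NN.mul {f g : PowerSeries ℚ} (hf : NN f) (hg : NN g) : NN (f * g) := fun n => by
  rw [coeff_mul]
  exact Finset.sum_nonneg fun p _ => mul_nonneg (hf _) (hg _)

lemma NN.pow {f : PowerSeries ℚ} (hf : NN f) (n : ℕ) : NN (f ^ n) := by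
  induction n with
  | zero => simpa using NN_one
  | succ k ih => rw [pow_succ]; exact ih.mul hf

lemma NN.prod {α : Type*} (t : Finset α) (F : α → PowerSeries ℚ)
    (h : ∀ i ∈ t, NN (F i)) : NN (∏ i ∈ t, F i) :=
  Finset.prod_induction F NN (fun _ _ => NN.mul) NN_one h

lemma NN_Sgeo (n : ℕ) : NN (Sgeo n) := fun k => by
  rw [coeff_Sgeo]; split <;> norm_num

lemma NN_one_add_X_pow (r : ℕ) : NN (1 + X ^ r) := fun k => by
  rw [map_add, coeff_one, coeff_X_pow]
  split <;> split <;> norm_num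

/-- Supported on multiples of `n`. -/
def Supp (n : ℕ) (f : PowerSeries ℚ) : Prop := ∀ k, ¬ n ∣ k → coeff (R := ℚ) k f = 0

lemma Supp_one (n : ℕ) : Supp n 1 := fun k hk => by
  rw [coeff_one, if_neg]; rintro rfl; exact hk (dvd_zero n)

lemma Supp.mul {n : ℕ} {f g : PowerSeries ℚ} (hf : Supp n f) (hg : Supp n g) :
    Supp n (f * g) := fun k hk => by
  rw [coeff_mul]
  refine Finset.sum_eq_zero fun p hp => ?_
  rw [Finset.HasAntidiagonal.mem_antidiagonal] at hp
  by_cases h1 : n ∣ p.1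
  · have h2 : ¬ n ∣ p.2 := fun h2 => hk (hp ▸ Nat.dvd_add h1 h2)
    rw [hg _ h2, mul_zero]
  · rw [hf _ h1, zero_mul]

lemma Supp.pow {n : ℕ} {f : PowerSeries ℚ} (hf : Supp n f) (m : ℕ) : Supp n (f ^ m) := by
  induction m with
  | zero => simpa using Supp_one n
  | succ k ih => rw [pow_succ]; exact ih.mul hf

lemma Supp_one_add_X_pow (n : ℕ) : Supp n (1 + X ^ n) := fun k hk => by
  have h0 : k ≠ 0 := fun h => hk (h ▸ dvd_zero n)
  have h1 : k ≠ n := fun h => hk (h ▸ dvd_refl n)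
  rw [map_add, coeff_one, coeff_X_pow, if_neg h0, if_neg h1, add_zero]

lemma Supp_Sgeo_mul (n m : ℕ) : Supp n (Sgeo (n * m)) := fun k hk => by
  rw [coeff_Sgeo, if_neg]
  exact fun hd => hk ((dvd_mul_right n m).trans hd)

/-- Truncation: multiplying by a series that is `1 + O(X^{g+1})` does not change
the coefficient of `X^g`. -/
lemma coeff_mul_trunc (P f : PowerSeries ℚ) (g : ℕ)
    (hf0 : coeff (R := ℚ) 0 f = 1) (hf : ∀ j, 0 < j → j ≤ g → coeff (R := ℚ) j f = 0) :
    coeff (R := ℚ) g (P * f) = coeff (R := ℚ) g P := by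
  rw [coeff_mul]
  rw [Finset.sum_eq_single (g, 0)]
  · rw [hf0, mul_one]
  · intro p hp hne
    rw [Finset.HasAntidiagonal.mem_antidiagonal] at hp
    have h2 : 0 < p.2 := by
      rcases Nat.eq_zero_or_pos p.2 with h | h
      · exfalso; apply hne; have : p.1 = g := by omega
        exact Prod.ext this h
      · exact h
    rw [hf p.2 h2 (by omega), mul_zero]
  · intro h
    exact absurd (Finset.HasAntidiagonal.mem_antidiagonal.mpr (by simp)) h

/-- The truncated product. -/
noncomputable def Pser (a b N : ℕ) : PowerSeries ℚ :=
  (∏ r ∈ Icc 1 N, (1 + X ^ r) ^ a) * (∏ s ∈ Icc 1 N, (Sgeo (2 * s)) ^ b)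

lemma key_id : (1 + X) * Sgeo 2 = Sgeo 1 := by
  ext k
  rw [add_mul, one_mul, map_add]
  cases k with
  | zero =>
    rw [mul_comm X, PowerSeries.coeff_zero_mul_X, coeff_Sgeo, coeff_Sgeo_one]
    simp
  | succ n =>
    rw [coeff_succ_X_mul, coeff_Sgeo, coeff_Sgeo, coeff_Sgeo_one]
    by_cases h : 2 ∣ n
    · have h' : ¬ 2 ∣ (n + 1) := by omega
      rw [if_pos h, if_neg h']; ring
    · have h' : 2 ∣ (n + 1) := by omega
      rw [if_neg h, if_pos h']; ring

lemma prod_Icc_one {N : ℕ} (hN : 1 ≤ N) (F : ℕ → PowerSeries ℚ) :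
    ∏ r ∈ Icc 1 N, F r = F 1 * ∏ r ∈ Icc 2 N, F r := by
  have h : Icc 1 N = insert 1 (Icc 2 N) := by
    ext x; simp only [mem_Icc, mem_insert]; omega
  rw [h, Finset.prod_insert (by simp)]

/-- The remaining factor after pulling out `(1-X)⁻² = Sgeo 1 * Sgeo 1`. -/
noncomputable def Useries (a b N : ℕ) : PowerSeries ℚ :=
  (1 + X) ^ (a - 2) * (Sgeo 2) ^ (b - 2) *
    ((∏ r ∈ Icc 2 N, (1 + X ^ r) ^ a) * (∏ s ∈ Icc 2 N, (Sgeo (2 * s)) ^ b))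

lemma Pser_eq (a b N : ℕ) (ha : 2 ≤ a) (hb : 2 ≤ b) (hN : 1 ≤ N) :
    Pser a b N = Sgeo 1 * (Sgeo 1 * Useries a b N) := by
  unfold Pser Useries
  rw [prod_Icc_one hN, prod_Icc_one hN]
  simp only [mul_one, pow_one]
  have h1 : (1 + X : PowerSeries ℚ) ^ a = (1 + X) ^ 2 * (1 + X) ^ (a - 2) := by
    rw [← pow_add]; congr 1; omega
  have h2 : (Sgeo 2) ^ b = (Sgeo 2) ^ 2 * (Sgeo 2) ^ (b - 2) := by
    rw [← pow_add]; congr 1; omega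
  have h3 : (1 + X : PowerSeries ℚ) ^ 2 * (Sgeo 2) ^ 2 = Sgeo 1 * Sgeo 1 := by
    rw [← mul_pow, key_id]; ring
  rw [h1, h2]
  calc ((1 + X) ^ 2 * (1 + X) ^ (a - 2) * ∏ r ∈ Icc 2 N, (1 + X ^ r) ^ a) *
        ((Sgeo 2) ^ 2 * (Sgeo 2) ^ (b - 2) * ∏ s ∈ Icc 2 N, (Sgeo (2 * s)) ^ b)
      = ((1 + X) ^ 2 * (Sgeo 2) ^ 2) *
        ((1 + X) ^ (a - 2) * (Sgeo 2) ^ (b - 2) *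
          ((∏ r ∈ Icc 2 N, (1 + X ^ r) ^ a) * (∏ s ∈ Icc 2 N, (Sgeo (2 * s)) ^ b))) := by
        ring
    _ = _ := by rw [h3]; ring

lemma NN_Useries (a b N : ℕ) : NN (Useries a b N) := by
  unfold Useries
  have h1 : NN ((1 : PowerSeries ℚ) + X) := by simpa using NN_one_add_X_pow 1
  exact ((h1.pow _).mul ((NN_Sgeo 2).pow _)).mul
    ((NN.prod _ _ fun i _ => (NN_one_add_X_pow i).pow a).mul
     (NN.prod _ _ fun i _ => (NN_Sgeo (2 * i)).pow b))

lemma constantCoeff_one_add_X_pow (r : ℕ) (hr : 0 < r) :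
    constantCoeff (R := ℚ) (1 + X ^ r) = 1 := by
  rw [map_add, map_one, map_pow, constantCoeff_X, zero_pow hr.ne', add_zero]

lemma coeff_zero_Useries (a b N : ℕ) : coeff (R := ℚ) 0 (Useries a b N) = 1 := by
  rw [coeff_zero_eq_constantCoeff]
  unfold Useries
  rw [map_mul, map_mul, map_mul, map_pow, map_pow, map_prod, map_prod]
  rw [constantCoeff_Sgeo]
  rw [show constantCoeff (R := ℚ) (1 + X) = 1 by
    simpa using constantCoeff_one_add_X_pow 1]
  rw [Finset.prod_eq_one fun i hi => by
    rw [map_pow, constantCoeff_one_add_X_pow i (by simp only [mem_Icc] at hi; omega),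
      one_pow]]
  rw [Finset.prod_eq_one fun i hi => by rw [map_pow, constantCoeff_Sgeo, one_pow]]
  norm_num

lemma Sgeo_one_eq : Sgeo 1 = 1 + X * Sgeo 1 := by
  ext k
  cases k with
  | zero =>
    rw [map_add, coeff_one, mul_comm X, PowerSeries.coeff_zero_mul_X, coeff_Sgeo_one]
    simp
  | succ n =>
    rw [map_add, coeff_one, coeff_succ_X_mul, coeff_Sgeo_one, coeff_Sgeo_one]
    simp

lemma coeff_succ_sub (V : PowerSeries ℚ) (g : ℕ) :
    coeff (R := ℚ) (g + 1) (Sgeo 1 * V) - coeff (R := ℚ) g (Sgeo 1 * V) = coeff (R := ℚ) (g + 1) V := by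
  have h : Sgeo 1 * V = V + X * (Sgeo 1 * V) := by
    nth_rewrite 1 [Sgeo_one_eq]; ring
  nth_rewrite 1 [h]
  rw [map_add, coeff_succ_X_mul]
  ring

lemma one_le_coeff_Sgeo_mul (U : PowerSeries ℚ) (hU : NN U) (h0 : coeff (R := ℚ) 0 U = 1)
    (n : ℕ) : 1 ≤ coeff (R := ℚ) n (Sgeo 1 * U) := by
  rw [coeff_mul]
  have hmem : (n, 0) ∈ antidiagonal n := by simp
  have hterm : coeff (R := ℚ) (n, 0).1 (Sgeo 1) * coeff (R := ℚ) (n, 0).2 U = 1 := by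
    rw [coeff_Sgeo_one, h0]; ring
  calc (1 : ℚ) = coeff (R := ℚ) (n, 0).1 (Sgeo 1) * coeff (R := ℚ) (n, 0).2 U := hterm.symm
    _ ≤ ∑ p ∈ antidiagonal n, coeff (R := ℚ) p.1 (Sgeo 1) * coeff (R := ℚ) p.2 U :=
        Finset.single_le_sum (fun p _ => mul_nonneg (NN_Sgeo 1 _) (hU _)) hmem

lemma Pser_succ (a b N : ℕ) :
    Pser a b (N + 1) =
      Pser a b N * ((1 + X ^ (N + 1)) ^ a * (Sgeo (2 * (N + 1))) ^ b) := by
  unfold Pser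
  have h : Icc 1 (N + 1) = insert (N + 1) (Icc 1 N) := by
    ext x; simp only [mem_Icc, mem_insert]; omega
  rw [h, Finset.prod_insert (by simp), Finset.prod_insert (by simp)]
  ring

lemma coeff_Pser_trunc (a b g : ℕ) :
    coeff (R := ℚ) g (Pser a b (g + 1)) = coeff (R := ℚ) g (Pser a b g) := by
  rw [Pser_succ, coeff_mul_trunc]
  · rw [coeff_zero_eq_constantCoeff, map_mul, map_pow, map_pow,
      constantCoeff_one_add_X_pow _ (by omega), constantCoeff_Sgeo, one_pow, one_pow,
      one_mul]
  · intro j hj hjg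
    have hsupp : Supp (g + 1) ((1 + X ^ (g + 1)) ^ a * (Sgeo (2 * (g + 1))) ^ b) := by
      refine ((Supp_one_add_X_pow (g + 1)).pow a).mul (Supp.pow ?_ b)
      rw [mul_comm]
      exact Supp_Sgeo_mul (g + 1) 2
    exact hsupp j fun hd => absurd (Nat.le_of_dvd hj hd) (by omega)

lemma W_eq (e : ℤ) (hneg : e < 0) (g : ℕ) :
    W e g = coeff (R := ℚ) g (Pser (-e).toNat ((24 - e) / 2).toNat g) := by
  have h1 : (∏ r ∈ Icc 1 g, zp (1 + X ^ r) (-e)) =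
      ∏ r ∈ Icc 1 g, (1 + X ^ r) ^ (-e).toNat :=
    Finset.prod_congr rfl fun r _ => by
      unfold zp; rw [if_pos (by omega : (0 : ℤ) ≤ -e)]
  have h2 : (∏ s ∈ Icc 1 g, zp (1 - X ^ (2 * s)) (-((24 - e) / 2))) =
      ∏ s ∈ Icc 1 g, (Sgeo (2 * s)) ^ ((24 - e) / 2).toNat :=
    Finset.prod_congr rfl fun s hs => by
      unfold zp
      rw [if_neg (by omega : ¬ (0 : ℤ) ≤ -((24 - e) / 2)), neg_neg,
        inv_one_sub_X_pow (2 * s) (by simp only [mem_Icc] at hs; omega)]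
  unfold W Pser
  rw [h1, h2]

lemma coeff_one_one_add_X_pow (a : ℕ) : coeff (R := ℚ) 1 ((1 + X : PowerSeries ℚ) ^ a) = a := by
  induction a with
  | zero => simp
  | succ n ih =>
    rw [pow_succ, mul_add, mul_one, map_add, ih, coeff_succ_mul_X,
      coeff_zero_eq_constantCoeff, map_pow]
    rw [show constantCoeff (R := ℚ) (1 + X) = 1 by simpa using constantCoeff_one_add_X_pow 1]
    push_cast; ring

theorem stmt1 (e : ℤ) (he : Even e) (hneg : e < 0) :
    W e 1 = (-e : ℚ) ∧ ∀ g : ℕ, 1 ≤ g → W e g < W e (g + 1) :=  by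
  have he2 : e % 2 = 0 := Int.even_iff.mp he
  set a := (-e).toNat with ha
  set b := ((24 - e) / 2).toNat with hb
  have ha2 : 2 ≤ a := by omega
  have hb2 : 2 ≤ b := by omega
  constructor
  · rw [W_eq e hneg 1]
    have h1 : Pser a b 1 = (1 + X) ^ a * (Sgeo 2) ^ b := by
      unfold Pser
      rw [show Icc 1 1 = {1} by rfl, Finset.prod_singleton, Finset.prod_singleton,
        pow_one, mul_one]
    rw [h1, coeff_mul_trunc]
    · rw [coeff_one_one_add_X_pow]
      have : ((-e).toNat : ℤ) = -e := Int.toNat_of_nonneg (by omega)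
      exact_mod_cast congrArg (Int.cast : ℤ → ℚ) this
    · rw [coeff_zero_eq_constantCoeff, map_pow, constantCoeff_Sgeo, one_pow]
    · intro j hj hjg
      have : j = 1 := by omega
      subst this
      exact (Supp.pow (by simpa using Supp_Sgeo_mul 2 1) b) 1 (by omega)
  · intro g hg
    rw [W_eq e hneg, W_eq e hneg, ← coeff_Pser_trunc]
    have hfac := Pser_eq a b (g + 1) ha2 hb2 (by omega)
    have hpos : (1 : ℚ) ≤ coeff (R := ℚ) (g + 1) (Sgeo 1 * Useries a b (g + 1)) :=
      one_le_coeff_Sgeo_mul _ (NN_Useries a b (g + 1)) (coeff_zero_Useries a b (g + 1)) _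
    have hsub := coeff_succ_sub (Sgeo 1 * Useries a b (g + 1)) g
    rw [← hfac] at hsub
    nlinarith [hsub, hpos]
end

section
/- The Gauss identity: $\prod_{n \ge 1} \frac{(1-q^n)^2}{1-q^{2n}} = 1 + 2\sum_{n \ge 1}(-1)^n q^{n^2}$ as an identity of formal power series. -/
open PowerSeries Finset

/-- The series `1 + 2 ∑_{n ≥ 1} (-1)^n q^{n^2}`. -/
noncomputable def gaussSeries : PowerSeries ℚ :=
  PowerSeries.mk fun g =>
    if g = 0 then 1
    else if Nat.sqrt g * Nat.sqrt g = g then 2 * (-1 : ℚ) ^ Nat.sqrt g else 0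



noncomputable def gb : ℕ → ℕ → PowerSeries ℚ
  | 0, 0 => 1
  | 0, _+1 => 0
  | _+1, 0 => 1
  | m+1, k+1 => gb m k + X ^ (2*(k+1)) * gb m (k+1)

lemma gb_zero (m : ℕ) : gb m 0 = 1 := by cases m <;> rfl

lemma gb_succ (m k : ℕ) : gb (m+1) (k+1) = gb m k + X ^ (2*(k+1)) * gb m (k+1) := rfl

lemma gb_eq_zero : ∀ m k, m < k → gb m k = 0 := by
  intro m
  induction m with
  | zero => intro k h; match k, h with | k+1, _ => rfl
  | succ m ih =>
    intro k h
    match k, h with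
    | k+1, h =>
      rw [gb_succ, ih k (by omega), ih (k+1) (by omega)]
      ring

lemma gb_diag : ∀ m, gb m m = 1 := by
  intro m
  induction m with
  | zero => rfl
  | succ m ih => rw [gb_succ, ih, gb_eq_zero m (m+1) (by omega)]; ring

lemma gb_ratio : ∀ m k, (1 - X ^ (2*(m-k))) * gb m k = (1 - (X:PowerSeries ℚ) ^ (2*(k+1))) * gb m (k+1) := by
  intro m
  induction m with
  | zero =>
    intro k
    cases k with
    | zero => simp [gb_eq_zero 0 1 (by omega), gb_zero]
    | succ k => rw [gb_eq_zero 0 (k+1) (by omega), gb_eq_zero 0 (k+2) (by omega)]; ring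
  | succ m ih =>
    intro k
    cases k with
    | zero =>
      rw [gb_zero, gb_succ, gb_zero]
      have h := ih 0
      rw [gb_zero, Nat.sub_zero] at h
      have e0 : m + 1 - 0 = m + 1 := by omega
      have hX : (X:PowerSeries ℚ)^(2*m) * X^(2*1) = X^(2*(m+1)) := by
        rw [← pow_add]; ring_nf
      rw [e0]
      linear_combination X^(2*1) * h - hX
    | succ k =>
      rcases le_or_gt (k+1) m with hm | hm
      · rw [gb_succ, gb_succ]
        have h1 := ih k
        have h2 := ih (k+1)
        have e1' : (X:PowerSeries ℚ)^(2*(k+1)) * X^(2*(m-k)) = X^(2*(m+1)) := by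
          rw [← pow_add, show 2*(k+1) + 2*(m-k) = 2*(m+1) from by omega]
        have e2' : (X:PowerSeries ℚ)^(2*(k+1+1)) * X^(2*(m-(k+1))) = X^(2*(m+1)) := by
          rw [← pow_add, show 2*(k+1+1) + 2*(m-(k+1)) = 2*(m+1) from by omega]
        rw [show m + 1 - (k+1) = m - k from by omega]
        linear_combination h1 + X^(2*(k+1+1)) * h2 + gb m (k+1) * (e2' - e1')
      · rcases Nat.lt_or_ge m k with h | h
        · rw [gb_eq_zero (m+1) (k+1) (by omega), gb_eq_zero (m+1) (k+2) (by omega)]; ring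
        · have hmk : m = k := by omega
          subst hmk
          rw [show m + 1 - (m+1) = 0 from by omega, gb_eq_zero (m+1) (m+2) (by omega)]
          simp

lemma gb_pascal2 (m k : ℕ) :
    gb (m+1) (k+1) = X ^ (2*(m-k)) * gb m k + gb m (k+1) := by
  have h := gb_ratio m k
  rw [gb_succ]
  linear_combination h

noncomputable def fq (n : ℕ) : PowerSeries ℚ := ∏ i ∈ Icc 1 n, (1 - X ^ (2*i))

lemma fq_zero : fq 0 = 1 := by simp [fq]

lemma fq_succ (n : ℕ) : fq (n+1) = fq n * (1 - X ^ (2*(n+1))) := by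
  rw [fq, fq, Finset.prod_Icc_succ_top (by omega)]

lemma gb_mul_fq : ∀ m k, k ≤ m → gb m k * fq k * fq (m-k) = fq m := by
  intro m
  induction m with
  | zero => intro k hk; interval_cases k; simp [gb_zero, fq_zero]
  | succ m ih =>
    intro k hk
    cases k with
    | zero => simp [gb_zero, fq_zero]
    | succ k =>
      rw [gb_succ, show m + 1 - (k+1) = m - k from by omega]
      rcases le_or_gt (k+1) m with h | h
      · have h1 := ih k (by omega)
        have h2 := ih (k+1) (by omega)
        have hf1 : fq (k+1) = fq k * (1 - X^(2*(k+1))) := fq_succ k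
        have hf2 : fq (m-k) = fq (m-(k+1)) * (1 - X^(2*(m-k))) := by
          rw [show m - k = (m - (k+1)) + 1 from by omega, fq_succ,
            show m - (k+1) + 1 = m - k from by omega]
        have hf3 : fq (m+1) = fq m * (1 - X^(2*(m+1))) := fq_succ m
        have hX : (X:PowerSeries ℚ)^(2*(k+1)) * X^(2*(m-k)) = X^(2*(m+1)) := by
          rw [← pow_add, show 2*(k+1) + 2*(m-k) = 2*(m+1) from by omega]
        rw [hf2] at h1
        rw [hf1] at h2
        rw [hf3, hf1, hf2]
        linear_combination (1 - X^(2*(k+1))) * h1 + X^(2*(k+1)) * (1 - X^(2*(m-k))) * h2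
          - fq m * hX
      · have hmk : m = k := by omega
        subst hmk
        rw [gb_eq_zero m (m+1) (by omega), show m - m = 0 from by omega,
          gb_diag, fq_zero]
        ring


def eE (n k : ℕ) : ℕ := (n-k)^2 + (k-n)^2

lemma eE_succ_succ (n k : ℕ) : eE (n+1) (k+1) = eE n k := by
  simp [eE, Nat.succ_sub_succ]

lemma eE_zero (n : ℕ) : eE n 0 = n^2 := by simp [eE]

lemma eE2 (n j : ℕ) (hj : j ≤ 2*n) :
    2*(2*n-j) + eE n (j+1) = (2*n+1) + eE n j := by
  rcases le_or_gt (j+1) n with h | h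
  · have e1 : eE n (j+1) = (n-(j+1))^2 := by
      simp [eE, Nat.sub_eq_zero_of_le (show j+1 ≤ n from h)]
    have e2 : eE n j = (n-j)^2 := by
      simp [eE, Nat.sub_eq_zero_of_le (show j ≤ n from by omega)]
    rw [e1, e2]
    zify [h, show j ≤ n from by omega, hj]
    ring
  · have e1 : eE n (j+1) = ((j+1)-n)^2 := by
      simp [eE, Nat.sub_eq_zero_of_le (show n ≤ j+1 from by omega)]
    rcases le_or_gt n j with h' | h'
    · have e2 : eE n j = (j-n)^2 := by
        simp [eE, Nat.sub_eq_zero_of_le h']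
      rw [e1, e2]
      zify [h', show n ≤ j+1 from by omega, hj]
      ring
    · have hnj : n = j + 1 := by omega
      subst hnj
      simp [eE]
      omega

lemma eE3 (n i : ℕ) : 2*i + eE (n+1) i = (2*n+1) + eE n i := by
  rcases le_or_gt i n with h | h
  · have e1 : eE (n+1) i = (n+1-i)^2 := by
      simp [eE, Nat.sub_eq_zero_of_le (show i ≤ n+1 from by omega)]
    have e2 : eE n i = (n-i)^2 := by
      simp [eE, Nat.sub_eq_zero_of_le h]
    rw [e1, e2]
    zify [h, show i ≤ n + 1 from by omega]
    ring
  · have e2 : eE n i = (i-n)^2 := by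
      simp [eE, Nat.sub_eq_zero_of_le (show n ≤ i from by omega)]
    rcases eq_or_lt_of_le (show n+1 ≤ i from h) with h' | h'
    · rw [e2, ← h']
      simp [eE]
      omega
    · rw [e2, show eE (n+1) i = (i-(n+1))^2 from by
        simp [eE, Nat.sub_eq_zero_of_le (show n+1 ≤ i from by omega)]]
      zify [show n+1 ≤ i from by omega, show n ≤ i from by omega]
      ring

lemma eE4 (n k : ℕ) : 2*(k+1) + eE n k = (2*n+1) + eE n (k+1) := by
  rcases le_or_gt (k+1) n with h | h
  · have e1 : eE n (k+1) = (n-(k+1))^2 := by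
      simp [eE, Nat.sub_eq_zero_of_le h]
    have e2 : eE n k = (n-k)^2 := by
      simp [eE, Nat.sub_eq_zero_of_le (show k ≤ n from by omega)]
    rw [e1, e2]
    zify [h, show k ≤ n from by omega]
    ring
  · have e1 : eE n (k+1) = ((k+1)-n)^2 := by
      simp [eE, Nat.sub_eq_zero_of_le (show n ≤ k+1 from by omega)]
    have e2 : eE n k = (k-n)^2 := by
      simp [eE, Nat.sub_eq_zero_of_le (show n ≤ k from by omega)]
    rw [e1, e2]
    zify [show n ≤ k from by omega, show n ≤ k+1 from by omega]
    ring



noncomputable def Sg (n : ℕ) : PowerSeries ℚ :=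
  ∑ k ∈ range (2*n+1), PowerSeries.C (R := ℚ) ((-1)^k) * gb (2*n) k * X^(eE n k)

lemma hCsucc (k : ℕ) : PowerSeries.C (R := ℚ) ((-1)^(k+1)) = -PowerSeries.C (R := ℚ) ((-1)^k) := by
  rw [pow_succ]; simp

lemma claim1 (n : ℕ) :
    Sg (n+1)
    = (∑ k ∈ range (2*n+2), PowerSeries.C (R := ℚ) ((-1)^k) * gb (2*n+1) k * X^(2*k + eE (n+1) k))
    - (∑ k ∈ range (2*n+2), PowerSeries.C (R := ℚ) ((-1)^k) * gb (2*n+1) k * X^(eE (n+1) (k+1))) := by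
  have hSg : Sg (n+1)
      = ∑ k ∈ range (2*(n+1)+1), PowerSeries.C (R := ℚ) ((-1)^k) * gb (2*(n+1)) k * X^(eE (n+1) k) := rfl
  rw [hSg, show 2*(n+1)+1 = (2*n+2)+1 from by omega]
  rw [Finset.sum_range_succ']
  have step : ∀ k ∈ range (2*n+2),
      PowerSeries.C (R := ℚ) ((-1)^(k+1)) * gb (2*(n+1)) (k+1) * X^(eE (n+1) (k+1)) =
      (PowerSeries.C (R := ℚ) ((-1)^(k+1)) * gb (2*n+1) (k+1) * X^(2*(k+1) + eE (n+1) (k+1)))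
      - (PowerSeries.C (R := ℚ) ((-1)^k) * gb (2*n+1) k * X^(eE (n+1) (k+1))) := by
    intro k _
    rw [show 2*(n+1) = (2*n+1)+1 from by omega, gb_succ, hCsucc, pow_add]
    ring
  rw [Finset.sum_congr rfl step, Finset.sum_sub_distrib]
  have hv : (∑ k ∈ range (2*n+2),
      PowerSeries.C (R := ℚ) ((-1)^(k+1)) * gb (2*n+1) (k+1) * X^(2*(k+1) + eE (n+1) (k+1)))
      = (∑ k ∈ range (2*n+2), PowerSeries.C (R := ℚ) ((-1)^k) * gb (2*n+1) k * X^(2*k + eE (n+1) k))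
        - PowerSeries.C (R := ℚ) ((-1)^0) * gb (2*n+1) 0 * X^(2*0 + eE (n+1) 0) := by
    have h1 := Finset.sum_range_succ'
      (fun k => PowerSeries.C (R := ℚ) ((-1)^k) * gb (2*n+1) k * X^(2*k + eE (n+1) k)) (2*n+2)
    have h2 := Finset.sum_range_succ
      (fun k => PowerSeries.C (R := ℚ) ((-1)^k) * gb (2*n+1) k * X^(2*k + eE (n+1) k)) (2*n+2)
    simp only [gb_eq_zero (2*n+1) (2*n+2) (by omega), mul_zero, zero_mul, add_zero] at h2
    rw [← h2, h1]
    ring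
  rw [hv]
  rw [gb_zero, gb_zero, eE_zero]
  ring

lemma claim2 (n : ℕ) :
    (∑ k ∈ range (2*n+2), PowerSeries.C (R := ℚ) ((-1)^k) * gb (2*n+1) k * X^(eE (n+1) (k+1)))
    = (1 - X^(2*n+1)) * Sg n := by
  rw [Finset.sum_range_succ']
  have step : ∀ k ∈ range (2*n+1),
      PowerSeries.C (R := ℚ) ((-1)^(k+1)) * gb (2*n+1) (k+1) * X^(eE (n+1) (k+1+1)) =
      (PowerSeries.C (R := ℚ) ((-1)^(k+1)) * gb (2*n) (k+1) * X^(eE n (k+1)))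
      - X^(2*n+1) * (PowerSeries.C (R := ℚ) ((-1)^k) * gb (2*n) k * X^(eE n k)) := by
    intro k hk
    rw [eE_succ_succ, gb_pascal2, hCsucc]
    have hXX : (X:PowerSeries ℚ)^(2*(2*n-k)) * X^(eE n (k+1)) = X^(2*n+1) * X^(eE n k) := by
      rw [← pow_add, ← pow_add, eE2 n k (by simp at hk; omega)]
    linear_combination (-(PowerSeries.C (R := ℚ) ((-1)^k)) * gb (2*n) k) * hXX
  rw [Finset.sum_congr rfl step, Finset.sum_sub_distrib]
  have hw : (∑ k ∈ range (2*n+1),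
      PowerSeries.C (R := ℚ) ((-1)^(k+1)) * gb (2*n) (k+1) * X^(eE n (k+1)))
      = Sg n - PowerSeries.C (R := ℚ) ((-1)^0) * gb (2*n) 0 * X^(eE n 0) := by
    have h1 := Finset.sum_range_succ'
      (fun k => PowerSeries.C (R := ℚ) ((-1)^k) * gb (2*n) k * X^(eE n k)) (2*n+1)
    have h2 := Finset.sum_range_succ
      (fun k => PowerSeries.C (R := ℚ) ((-1)^k) * gb (2*n) k * X^(eE n k)) (2*n+1)
    simp only [gb_eq_zero (2*n) (2*n+1) (by omega), mul_zero, zero_mul, add_zero] at h2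
    have hSg : Sg n = ∑ k ∈ range (2*n+1), PowerSeries.C (R := ℚ) ((-1)^k) * gb (2*n) k * X^(eE n k) := rfl
    rw [hSg, ← h2, h1]
    ring
  rw [hw, ← Finset.mul_sum]
  have hSg : Sg n = ∑ k ∈ range (2*n+1), PowerSeries.C (R := ℚ) ((-1)^k) * gb (2*n) k * X^(eE n k) := rfl
  rw [← hSg, gb_zero, gb_zero, eE_zero, eE_succ_succ, eE_zero]
  ring

lemma claim3 (n : ℕ) :
    (∑ k ∈ range (2*n+2), PowerSeries.C (R := ℚ) ((-1)^k) * gb (2*n+1) k * X^(2*k + eE (n+1) k))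
    = (X^(2*n+1) - X^(4*n+2)) * Sg n := by
  rw [Finset.sum_range_succ']
  have step : ∀ k ∈ range (2*n+1),
      PowerSeries.C (R := ℚ) ((-1)^(k+1)) * gb (2*n+1) (k+1) * X^(2*(k+1) + eE (n+1) (k+1)) =
      X^(2*n+1) * (PowerSeries.C (R := ℚ) ((-1)^(k+1)) * gb (2*n) (k+1) * X^(eE n (k+1)))
      - X^(4*n+2) * (PowerSeries.C (R := ℚ) ((-1)^k) * gb (2*n) k * X^(eE n k)) := by
    intro k hk
    rw [eE_succ_succ, gb_pascal2, hCsucc]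
    have hXa : (X:PowerSeries ℚ)^(2*(2*n-k)) * X^(2*(k+1) + eE n k) = X^(4*n+2) * X^(eE n k) := by
      rw [← pow_add, ← pow_add]
      congr 1
      simp at hk
      omega
    have hXb : (X:PowerSeries ℚ)^(2*(k+1) + eE n k) = X^(2*n+1) * X^(eE n (k+1)) := by
      rw [← pow_add, eE4]
    linear_combination (-(PowerSeries.C (R := ℚ) ((-1)^k)) * gb (2*n) k) * hXa
      - (PowerSeries.C (R := ℚ) ((-1)^k)) * gb (2*n) (k+1) * hXb
  rw [Finset.sum_congr rfl step, Finset.sum_sub_distrib]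
  have hw : (∑ k ∈ range (2*n+1),
      X^(2*n+1) * (PowerSeries.C (R := ℚ) ((-1)^(k+1)) * gb (2*n) (k+1) * X^(eE n (k+1))))
      = X^(2*n+1) * (Sg n - PowerSeries.C (R := ℚ) ((-1)^0) * gb (2*n) 0 * X^(eE n 0)) := by
    rw [← Finset.mul_sum]
    congr 1
    have h1 := Finset.sum_range_succ'
      (fun k => PowerSeries.C (R := ℚ) ((-1)^k) * gb (2*n) k * X^(eE n k)) (2*n+1)
    have h2 := Finset.sum_range_succ
      (fun k => PowerSeries.C (R := ℚ) ((-1)^k) * gb (2*n) k * X^(eE n k)) (2*n+1)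
    simp only [gb_eq_zero (2*n) (2*n+1) (by omega), mul_zero, zero_mul, add_zero] at h2
    have hSg : Sg n = ∑ k ∈ range (2*n+1), PowerSeries.C (R := ℚ) ((-1)^k) * gb (2*n) k * X^(eE n k) := rfl
    rw [hSg, ← h2, h1]
    ring
  rw [hw, ← Finset.mul_sum]
  have hSg : Sg n = ∑ k ∈ range (2*n+1), PowerSeries.C (R := ℚ) ((-1)^k) * gb (2*n) k * X^(eE n k) := rfl
  rw [← hSg, gb_zero, gb_zero, eE_zero, eE_zero]
  have hX0 : (X:PowerSeries ℚ)^(2*0 + (n+1)^2) = X^(2*n+1) * X^(n^2) := by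
    rw [← pow_add]
    congr 1
    ring
  rw [hX0]
  ring

lemma Sg_succ (n : ℕ) : Sg (n+1) = - ((1 - X^(2*n+1))^2 * Sg n) := by
  rw [claim1, claim2, claim3]
  have hp : ((X:PowerSeries ℚ)^(2*n+1))^2 = X^(4*n+2) := by
    rw [← pow_mul]
    congr 1
    omega
  linear_combination (- Sg n) * hp

lemma Sg_eq (n : ℕ) :
    Sg n = PowerSeries.C (R := ℚ) ((-1)^n) * (∏ j ∈ Icc 1 n, (1 - X^(2*j-1)))^2 := by
  induction n with
  | zero =>
    have : Sg 0 = ∑ k ∈ range 1, PowerSeries.C (R := ℚ) ((-1)^k) * gb 0 k * X^(eE 0 k) := rfl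
    rw [this]
    simp [gb_zero, eE_zero]
  | succ n ih =>
    rw [Sg_succ, ih, Finset.prod_Icc_succ_top (show 1 ≤ n+1 from by omega), hCsucc,
      show 2*(n+1)-1 = 2*n+1 from by omega]
    ring


lemma Sg_def (n : ℕ) : Sg n = ∑ k ∈ range (2*n+1), PowerSeries.C (R := ℚ) ((-1)^k) * gb (2*n) k * X^(eE n k) := rfl




-- tail divisibility
lemma tail_dvd (s : Finset ℕ) (c : ℕ → ℕ) (t : ℕ) (h : ∀ i ∈ s, t ≤ c i) :
    (X:PowerSeries ℚ)^t ∣ (∏ i ∈ s, (1 - X^(c i))) - 1 := by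
  induction s using Finset.induction_on with
  | empty => simp
  | @insert a s' hni ih =>
    rw [Finset.prod_insert hni]
    have h1 : (1 - (X:PowerSeries ℚ)^(c a)) * (∏ i ∈ s', (1 - X^(c i))) - 1
        = ((∏ i ∈ s', (1 - X^(c i))) - 1) - X^(c a) * (∏ i ∈ s', (1 - X^(c i))) := by ring
    rw [h1]
    exact dvd_sub (ih fun i hi => h i (Finset.mem_insert_of_mem hi))
      (Dvd.dvd.mul_right (pow_dvd_pow X (h a (Finset.mem_insert_self a s'))) _)

lemma coeff_eq_of_dvd {g : ℕ} {f h : PowerSeries ℚ} (hd : (X:PowerSeries ℚ)^(g+1) ∣ f - h) :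
    PowerSeries.coeff (R := ℚ) g f = PowerSeries.coeff (R := ℚ) g h := by
  have := PowerSeries.X_pow_dvd_iff.mp hd g (by omega)
  rw [map_sub, sub_eq_zero] at this
  exact this

lemma constCoeff_fq (n : ℕ) : constantCoeff (R := ℚ) (fq n) = 1 := by
  rw [fq, map_prod]
  apply Finset.prod_eq_one
  intro i hi
  have : (2*i) ≠ 0 := by simp at hi; omega
  simp [map_pow, constantCoeff_X, zero_pow this]

lemma Icc_one_eq_Ioc (N : ℕ) : Icc 1 N = Ioc 0 N := by
  ext x; simp; omega

lemma fq_split {a N : ℕ} (h : a ≤ N) :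
    fq N = fq a * ∏ i ∈ Ioc a N, (1 - X^(2*i)) := by
  rw [fq, fq, Icc_one_eq_Ioc, Icc_one_eq_Ioc]
  rw [← Finset.prod_Ioc_consecutive _ (Nat.zero_le a) h]

lemma ioc_tail_dvd (a N : ℕ) :
    (X:PowerSeries ℚ)^(2*a+2) ∣ (∏ i ∈ Ioc a N, (1 - X^(2*i))) - 1 := by
  apply tail_dvd
  intro i hi
  simp at hi
  omega

lemma diff_dvd' (g a b : ℕ) (hbg : b ≤ 2*g) (hag : a ≤ g) (hab : a ≤ b) :
    (X:PowerSeries ℚ)^(2*a+2) ∣ fq (2*g) * fq g - fq a * fq b := by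
  rw [fq_split (show a ≤ 2*g from by omega), fq_split hag, fq_split hab]
  have h1 : fq a * (∏ i ∈ Ioc a (2*g), (1 - X^(2*i))) * (fq a * ∏ i ∈ Ioc a g, (1 - X^(2*i)))
      - fq a * (fq a * ∏ i ∈ Ioc a b, (1 - X^(2*i)))
      = (fq a * fq a) *
        ((∏ i ∈ Ioc a (2*g), (1 - X^(2*i))) * ((∏ i ∈ Ioc a g, (1 - X^(2*i))) - 1)
          + ((∏ i ∈ Ioc a (2*g), (1 - X^(2*i))) - 1)
          - ((∏ i ∈ Ioc a b, (1 - X^(2*i))) - 1)) := by ring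
  rw [h1]
  apply Dvd.dvd.mul_left
  exact dvd_sub (dvd_add (Dvd.dvd.mul_left (ioc_tail_dvd a g) _) (ioc_tail_dvd a (2*g)))
    (ioc_tail_dvd a b)

lemma diff_dvd (g k : ℕ) (hk : k ≤ 2*g) :
    (X:PowerSeries ℚ)^(2*(min k (2*g-k))+2) ∣ fq (2*g) * fq g - fq k * fq (2*g-k) := by
  rcases le_total k (2*g-k) with h | h
  · rw [min_eq_left h]
    exact diff_dvd' g k (2*g-k) (by omega) (by omega) h
  · rw [min_eq_right h, mul_comm (fq k)]
    exact diff_dvd' g (2*g-k) k (by omega) (by omega) h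

lemma key_ineq (g k : ℕ) (hk : k ≤ 2*g) : g + 1 ≤ eE g k + (2*(min k (2*g-k))+2) := by
  rcases le_or_gt k g with h | h
  · have e : eE g k = (g-k)^2 := by simp [eE, Nat.sub_eq_zero_of_le h]
    rw [e, min_eq_left (by omega)]
    zify [h]
    nlinarith [sq_nonneg ((g:ℤ) - k - 1)]
  · have e : eE g k = (k-g)^2 := by simp [eE, Nat.sub_eq_zero_of_le (le_of_lt h)]
    rw [e, min_eq_right (by omega)]
    zify [le_of_lt h, hk]
    nlinarith [sq_nonneg ((k:ℤ) - g - 1)]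

lemma key_coeff (g k d : ℕ) (hk : k ≤ 2*g) (hd : d + eE g k ≤ g) :
    PowerSeries.coeff (R := ℚ) d (gb (2*g) k * fq g) = if d = 0 then 1 else 0 := by
  have hL3 : gb (2*g) k * fq k * fq (2*g-k) = fq (2*g) := gb_mul_fq (2*g) k hk
  set U : PowerSeries ℚ := fq k * fq (2*g-k) with hU
  have hUc : constantCoeff (R := ℚ) U ≠ 0 := by
    rw [hU, map_mul, constCoeff_fq, constCoeff_fq]; norm_num
  have hUinv : U * U⁻¹ = 1 := PowerSeries.mul_inv_cancel U hUc
  have hkey : gb (2*g) k * fq g - 1 = (fq (2*g) * fq g - U) * U⁻¹ := by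
    have h1 : (gb (2*g) k * fq g - 1) * U = fq (2*g) * fq g - U := by
      rw [hU]; linear_combination fq g * hL3
    calc gb (2*g) k * fq g - 1 = (gb (2*g) k * fq g - 1) * (U * U⁻¹) := by rw [hUinv, mul_one]
      _ = ((gb (2*g) k * fq g - 1) * U) * U⁻¹ := by ring
      _ = (fq (2*g) * fq g - U) * U⁻¹ := by rw [h1]
  have hdvd : (X:PowerSeries ℚ)^(2*(min k (2*g-k))+2) ∣ gb (2*g) k * fq g - 1 := by
    rw [hkey]
    exact Dvd.dvd.mul_right (diff_dvd g k hk) _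
  have hcoeff : PowerSeries.coeff (R := ℚ) d (gb (2*g) k * fq g) = PowerSeries.coeff (R := ℚ) d 1 := by
    have hlt : d < 2*(min k (2*g-k))+2 := by
      have := key_ineq g k hk
      omega
    have := PowerSeries.X_pow_dvd_iff.mp hdvd d hlt
    rw [map_sub, sub_eq_zero] at this
    exact this
  rw [hcoeff, PowerSeries.coeff_one]

lemma term_coeff (g k : ℕ) (hk : k ≤ 2*g) :
    PowerSeries.coeff (R := ℚ) g (X^(eE g k) * (gb (2*g) k * fq g)) =
      if eE g k = g then 1 else 0 := by
  rw [PowerSeries.coeff_X_pow_mul']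
  rcases le_or_gt (eE g k) g with h | h
  · rw [if_pos h, key_coeff g k (g - eE g k) hk (by omega)]
    by_cases he : eE g k = g
    · rw [if_pos he, if_pos (by omega)]
    · rw [if_neg he, if_neg (by omega)]
  · rw [if_neg (by omega), if_neg (by omega)]

lemma neg_pow_parity (m n : ℕ) (h : m % 2 = n % 2) : ((-1:ℚ))^m = (-1)^n := by
  rcases Nat.even_or_odd m with hm | hm
  · rw [hm.neg_one_pow, (Nat.even_iff.mpr (by rw [Nat.even_iff] at hm; omega)).neg_one_pow]
  · rw [hm.neg_one_pow, (Nat.odd_iff.mpr (by rw [Nat.odd_iff] at hm; omega)).neg_one_pow]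

lemma eE_eq_iff (g k : ℕ) (hg : g ≠ 0) (hsq : Nat.sqrt g * Nat.sqrt g = g) :
    eE g k = g ↔ (k = g - Nat.sqrt g ∨ k = g + Nat.sqrt g) := by
  set s := Nat.sqrt g with hs
  have hs1 : 1 ≤ s := by
    rcases Nat.eq_zero_or_pos s with h | h
    · rw [h] at hsq; omega
    · omega
  have hsg : s ≤ g := by calc s ≤ s * s := Nat.le_mul_of_pos_left s (by omega)
                           _ = g := hsq
  constructor
  · intro h
    rcases le_or_gt k g with hkg | hkg
    · have he : (g-k)^2 = g := by
        simpa [eE, Nat.sub_eq_zero_of_le hkg] using h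
      have h2 := Nat.sqrt_eq' (g-k)
      rw [he] at h2
      omega
    · have he : (k-g)^2 = g := by
        simpa [eE, Nat.sub_eq_zero_of_le (le_of_lt hkg)] using h
      have h2 := Nat.sqrt_eq' (k-g)
      rw [he] at h2
      omega
  · intro h
    rcases h with h | h
    · subst h
      have h1 : g - (g - s) = s := by omega
      have h2 : (g - s) - g = 0 := by omega
      rw [eE, h1, h2]
      simpa [pow_two] using hsq
    · subst h
      have h1 : g - (g + s) = 0 := by omega
      have h2 : (g + s) - g = s := by omega
      rw [eE, h1, h2]
      simpa [pow_two] using hsq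

lemma sum_eval (g : ℕ) :
    (∑ k ∈ range (2*g+1), (-1:ℚ)^(g+k) * (if eE g k = g then 1 else 0)) =
    PowerSeries.coeff (R := ℚ) g gaussSeries := by
  rw [gaussSeries, PowerSeries.coeff_mk]
  rcases eq_or_ne g 0 with hg | hg
  · subst hg
    simp [eE]
  · rw [if_neg hg]
    have hconv : ∀ k ∈ range (2*g+1),
        (-1:ℚ)^(g+k) * (if eE g k = g then 1 else 0) =
        (if eE g k = g then ((-1:ℚ)^(g+k)) else 0) := by
      intro k _
      split <;> ring
    rw [Finset.sum_congr rfl hconv, ← Finset.sum_filter]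
    by_cases hsq : Nat.sqrt g * Nat.sqrt g = g
    · rw [if_pos hsq]
      set s := Nat.sqrt g with hs
      have hs1 : 1 ≤ s := by
        rcases Nat.eq_zero_or_pos s with h | h
        · rw [h] at hsq; omega
        · omega
      have hsg : s ≤ g := by calc s ≤ s * s := Nat.le_mul_of_pos_left s (by omega)
                               _ = g := hsq
      have hfil : (range (2*g+1)).filter (fun k => eE g k = g) = {g - s, g + s} := by
        ext k
        simp only [Finset.mem_filter, Finset.mem_range, Finset.mem_insert, Finset.mem_singleton]
        constructor
        · rintro ⟨_, h⟩
          exact (eE_eq_iff g k hg hsq).mp h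
        · intro h
          refine ⟨by omega, (eE_eq_iff g k hg hsq).mpr h⟩
      rw [hfil, Finset.sum_pair (by omega)]
      have e1 : (-1:ℚ)^(g+(g-s)) = (-1)^s := neg_pow_parity _ _ (by omega)
      have e2 : (-1:ℚ)^(g+(g+s)) = (-1)^s := neg_pow_parity _ _ (by omega)
      rw [e1, e2]
      ring
    · rw [if_neg hsq]
      have hfil : (range (2*g+1)).filter (fun k => eE g k = g) = ∅ := by
        ext k
        simp only [Finset.mem_filter, Finset.mem_range, Finset.notMem_empty, iff_false,
          not_and]
        intro _
        intro h
        apply hsq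
        rcases le_or_gt k g with hkg | hkg
        · have he : (g-k)^2 = g := by
            simpa [eE, Nat.sub_eq_zero_of_le hkg] using h
          have h2 := Nat.sqrt_eq' (g-k)
          rw [he] at h2
          rw [h2, ← pow_two]
          exact he
        · have he : (k-g)^2 = g := by
            simpa [eE, Nat.sub_eq_zero_of_le (le_of_lt hkg)] using h
          have h2 := Nat.sqrt_eq' (k-g)
          rw [he] at h2
          rw [h2, ← pow_two]
          exact he
      rw [hfil, Finset.sum_empty]

lemma coeff_T (g : ℕ) :
    PowerSeries.coeff (R := ℚ) g (PowerSeries.C (R := ℚ) ((-1)^g) * Sg g * fq g) =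
    ∑ k ∈ range (2*g+1), (-1:ℚ)^(g+k) * (if eE g k = g then 1 else 0) := by
  rw [Sg_def, Finset.mul_sum, Finset.sum_mul, map_sum]
  apply Finset.sum_congr rfl
  intro k hk
  have hre : PowerSeries.C (R := ℚ) ((-1)^g) * (PowerSeries.C (R := ℚ) ((-1)^k) * gb (2*g) k * X^(eE g k)) * fq g
      = PowerSeries.C (R := ℚ) ((-1)^(g+k)) * (X^(eE g k) * (gb (2*g) k * fq g)) := by
    rw [pow_add, map_mul]
    ring
  rw [hre, PowerSeries.coeff_C_mul, term_coeff g k (by simp at hk; omega)]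

noncomputable def Aq (N : ℕ) : PowerSeries ℚ := ∏ m ∈ Icc 1 N, (1 - X^m)
noncomputable def Aodd (g : ℕ) : PowerSeries ℚ := ∏ j ∈ Icc 1 g, (1 - X^(2*j-1))
noncomputable def Iq (g : ℕ) : PowerSeries ℚ := ∏ n ∈ Icc 1 g, (1 - X^(2*n))⁻¹

lemma hsplit (g : ℕ) : Aq (2*g) = Aodd g * fq g := by
  have hun : Icc 1 (2*g) = ((Icc 1 g).image (fun j => 2*j-1)) ∪ ((Icc 1 g).image (fun j => 2*j)) := by
    ext m
    simp only [Finset.mem_Icc, Finset.mem_union, Finset.mem_image]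
    constructor
    · intro h
      rcases Nat.even_or_odd m with ⟨t, ht⟩ | ⟨t, ht⟩
      · right; exact ⟨t, by omega, by omega⟩
      · left; exact ⟨t+1, by omega, by omega⟩
    · rintro (⟨j, hj, rfl⟩ | ⟨j, hj, rfl⟩) <;> omega
  have hdisj : Disjoint ((Icc 1 g).image (fun j => 2*j-1)) ((Icc 1 g).image (fun j => 2*j)) := by
    rw [Finset.disjoint_left]
    rintro m hm1 hm2
    simp only [Finset.mem_image, Finset.mem_Icc] at hm1 hm2
    obtain ⟨a, ha, rfl⟩ := hm1
    obtain ⟨b, hb, hf⟩ := hm2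
    omega
  rw [Aq, hun, Finset.prod_union hdisj,
    Finset.prod_image (fun a ha b hb h => by simp at ha hb; omega),
    Finset.prod_image (fun a ha b hb h => by omega)]
  rfl

lemma hIq (g : ℕ) : fq g * Iq g = 1 := by
  rw [fq, Iq, ← Finset.prod_mul_distrib]
  apply Finset.prod_eq_one
  intro n hn
  apply PowerSeries.mul_inv_cancel
  have : (2*n) ≠ 0 := by simp at hn; omega
  simp [map_pow, constantCoeff_X, zero_pow this]

theorem stmt4' (g : ℕ) :
    PowerSeries.coeff (R := ℚ) g
      (∏ n ∈ Icc 1 g,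
        ((1 - PowerSeries.X ^ n) ^ 2 * (1 - PowerSeries.X ^ (2 * n))⁻¹)) =
    PowerSeries.coeff (R := ℚ) g gaussSeries := by
  have hlhs : (∏ n ∈ Icc 1 g, ((1 - (X:PowerSeries ℚ)^n)^2 * (1 - X^(2*n))⁻¹))
      = Aq g ^ 2 * Iq g := by
    rw [Finset.prod_mul_distrib, Aq, Iq, Finset.prod_pow]
  rw [hlhs]
  have step1 : PowerSeries.coeff (R := ℚ) g (Aq g ^ 2 * Iq g) =
      PowerSeries.coeff (R := ℚ) g (Aq (2*g) ^ 2 * Iq g) := by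
    apply coeff_eq_of_dvd
    have hA2g : Aq (2*g) = Aq g * ∏ m ∈ Ioc g (2*g), (1 - X^m) := by
      rw [Aq, Aq, Icc_one_eq_Ioc, Icc_one_eq_Ioc,
        ← Finset.prod_Ioc_consecutive _ (Nat.zero_le g) (by omega)]
    set R : PowerSeries ℚ := ∏ m ∈ Ioc g (2*g), (1 - X^m) with hR
    have hRdvd : (X:PowerSeries ℚ)^(g+1) ∣ R - 1 := by
      apply tail_dvd
      intro i hi
      simp at hi
      omega
    have hfac : Aq g ^ 2 * Iq g - Aq (2*g) ^ 2 * Iq g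
        = (R - 1) * (-(R + 1) * Aq g ^ 2 * Iq g) := by
      rw [hA2g]
      ring
    rw [hfac]
    exact Dvd.dvd.mul_right hRdvd _
  rw [step1]
  have hCC : PowerSeries.C (R := ℚ) ((-1)^g) * PowerSeries.C (R := ℚ) ((-1)^g) = 1 := by
    rw [← map_mul, ← pow_add]
    have he : Even (g+g) := ⟨g, rfl⟩
    rw [he.neg_one_pow]
    simp
  have hT : Aq (2*g) ^ 2 * Iq g = PowerSeries.C (R := ℚ) ((-1)^g) * Sg g * fq g := by
    have h1 : Aq (2*g) ^ 2 * Iq g = Aodd g ^ 2 * fq g * (fq g * Iq g) := by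
      rw [hsplit]
      ring
    rw [h1, hIq, mul_one, Sg_eq]
    calc Aodd g ^ 2 * fq g
        = (PowerSeries.C (R := ℚ) ((-1)^g) * PowerSeries.C (R := ℚ) ((-1)^g)) * (Aodd g ^2 * fq g) := by
          rw [hCC]; ring
      _ = PowerSeries.C (R := ℚ) ((-1)^g) * (PowerSeries.C (R := ℚ) ((-1)^g) * (∏ j ∈ Icc 1 g, (1 - X^(2*j-1)))^2) * fq g := by
          rw [Aodd]; ring
  rw [hT, coeff_T, sum_eval]


theorem stmt4 (g : ℕ) :
    PowerSeries.coeff (R := ℚ) g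
      (∏ n ∈ Icc 1 g,
        ((1 - PowerSeries.X ^ n) ^ 2 * (1 - PowerSeries.X ^ (2 * n))⁻¹)) =
    PowerSeries.coeff (R := ℚ) g gaussSeries := stmt4' g
end

section
/- For any even integer $e$, the coefficients $w_g$ of $\prod_{r \ge 1}(1+q^r)^{-e} \cdot \prod_{s \ge 1}(1-q^{2s})^{-(24-e)/2}$ and the coefficients $c_g$ of $\prod_{s \ge 1}(1-q^s)^{-24}$ satisfy $w_g \equiv c_g \pmod 2$ for all $g \ge 0$. -/
open PowerSeries Finset

section aux

lemma isUnitA (s : ℕ) (hs : 1 ≤ s) : IsUnit (1 - X ^ s : PowerSeries ℤ) := by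
  rw [PowerSeries.isUnit_iff_constantCoeff]
  simp [constantCoeff_X, zero_pow (by omega : s ≠ 0)]

lemma isUnitB (s : ℕ) (hs : 1 ≤ s) : IsUnit (1 + X ^ s : PowerSeries ℤ) := by
  rw [PowerSeries.isUnit_iff_constantCoeff]
  simp [constantCoeff_X, zero_pow (by omega : s ≠ 0)]

/-- The unit `1 - X^s` of `PowerSeries ℤ` (for `s ≥ 1`; junk value `1` otherwise). -/
noncomputable def Au (s : ℕ) : (PowerSeries ℤ)ˣ :=
  if h : 1 ≤ s then (isUnitA s h).unit else 1

/-- The unit `1 + X^s` of `PowerSeries ℤ` (for `s ≥ 1`; junk value `1` otherwise). -/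
noncomputable def Bu (s : ℕ) : (PowerSeries ℤ)ˣ :=
  if h : 1 ≤ s then (isUnitB s h).unit else 1

lemma Au_val (s : ℕ) (hs : 1 ≤ s) : (Au s : PowerSeries ℤ) = 1 - X ^ s := by
  rw [Au, dif_pos hs]; exact (isUnitA s hs).unit_spec

lemma Bu_val (s : ℕ) (hs : 1 ≤ s) : (Bu s : PowerSeries ℤ) = 1 + X ^ s := by
  rw [Bu, dif_pos hs]; exact (isUnitB s hs).unit_spec

noncomputable abbrev mq : PowerSeries ℤ →+* PowerSeries ℚ :=
  PowerSeries.map (Int.castRingHom ℚ)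

lemma constCoeff_ne_zero (u : (PowerSeries ℤ)ˣ) :
    constantCoeff (R := ℚ) (mq ↑u) ≠ 0 := by
  have h1 : IsUnit (constantCoeff (R := ℤ) ↑u) := PowerSeries.isUnit_constantCoeff _ u.isUnit
  have h2 : (constantCoeff (R := ℤ) ↑u : ℤ) ≠ 0 := h1.ne_zero
  have h3 : constantCoeff (R := ℚ) (mq ↑u) = ((constantCoeff (R := ℤ) ↑u : ℤ) : ℚ) := by
    rw [← coeff_zero_eq_constantCoeff_apply, PowerSeries.coeff_map,
      coeff_zero_eq_constantCoeff_apply]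
    rfl
  rw [h3]
  exact_mod_cast h2

lemma mq_inv (u : (PowerSeries ℤ)ˣ) : mq ↑u⁻¹ = (mq ↑u)⁻¹ := by
  rw [PowerSeries.eq_inv_iff_mul_eq_one (constCoeff_ne_zero u)]
  rw [← map_mul]; norm_cast; simp

lemma zp_mq (u : (PowerSeries ℤ)ˣ) (n : ℤ) : zp (mq ↑u) n = mq ↑(u ^ n) := by
  rcases le_or_gt 0 n with h | h
  · rw [zp, if_pos h]
    have : u ^ n = u ^ n.toNat := by rw [← zpow_natCast, Int.toNat_of_nonneg h]
    rw [this, Units.val_pow_eq_pow_val, map_pow]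
  · rw [zp, if_neg (not_le.2 h), ← mq_inv]
    have : u ^ n = (u⁻¹) ^ (-n).toNat := by
      rw [← zpow_natCast, Int.toNat_of_nonneg (by omega), inv_zpow, ← zpow_neg, neg_neg]
    rw [this, Units.val_pow_eq_pow_val, map_pow]

noncomputable abbrev m2 : PowerSeries ℤ →+* PowerSeries (ZMod 2) :=
  PowerSeries.map (Int.castRingHom (ZMod 2))

lemma two_eq_zero' : (2 : PowerSeries (ZMod 2)) = 0 := by
  rw [← map_ofNat (PowerSeries.C (R := ZMod 2)) 2, show ((2:ZMod 2)) = 0 from rfl, map_zero]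

lemma m2_B_eq_A (s : ℕ) (hs : 1 ≤ s) : m2 ↑(Bu s) = m2 ↑(Au s) := by
  rw [Bu_val s hs, Au_val s hs, map_add, map_sub]
  linear_combination (m2 (X ^ s)) * two_eq_zero'

lemma m2_A_two (s : ℕ) (hs : 1 ≤ s) : m2 ↑(Au (2 * s)) = (m2 ↑(Au s)) ^ 2 := by
  rw [Au_val _ (by omega), Au_val s hs]
  have h : m2 (X ^ (2 * s)) = (m2 (X ^ s)) ^ 2 := by
    rw [← map_pow, ← pow_mul, mul_comm s 2]
  rw [map_sub, map_one, h, map_sub, map_one]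
  linear_combination (m2 (X ^ s) - m2 (X ^ s) ^ 2) * two_eq_zero'

end aux

theorem stmt6 (e : ℤ) (he : Even e) (g : ℕ) :
    ∃ k : ℤ, W e g - _root_.C g = 2 * k := by
  set Wu : (PowerSeries ℤ)ˣ :=
    (∏ r ∈ Icc 1 g, (Bu r) ^ (-e)) * (∏ s ∈ Icc 1 g, (Au (2 * s)) ^ (-((24 - e) / 2))) with hWu
  set Cu : (PowerSeries ℤ)ˣ := ∏ s ∈ Icc 1 g, (Au s) ^ (-24 : ℤ) with hCu
  -- Step 1: W e g is the g-th coefficient of mq Wu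
  have hW : W e g = PowerSeries.coeff (R := ℚ) g (mq ↑Wu) := by
    have hs : mq ↑Wu =
        (∏ r ∈ Icc 1 g, zp (1 + X ^ r) (-e)) *
          ∏ s ∈ Icc 1 g, zp (1 - X ^ (2 * s)) (-((24 - e) / 2)) := by
      rw [hWu, Units.val_mul, Units.coe_prod, Units.coe_prod, map_mul, map_prod, map_prod]
      congr 1
      · refine Finset.prod_congr rfl fun r hr => ?_
        rw [← zp_mq, Bu_val r (mem_Icc.1 hr).1]

        rw [map_add, map_one, map_pow, PowerSeries.map_X]
      · refine Finset.prod_congr rfl fun s hsm => ?_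
        rw [← zp_mq, Au_val (2 * s) (by have := (mem_Icc.1 hsm).1; omega)]

        rw [map_sub, map_one, map_pow, PowerSeries.map_X]
    rw [W, hs]
  -- Step 1': C g is the g-th coefficient of mq Cu
  have hC : _root_.C g = PowerSeries.coeff (R := ℚ) g (mq ↑Cu) := by
    have hs : mq ↑Cu = ∏ s ∈ Icc 1 g, ((1 - X ^ s)⁻¹ : PowerSeries ℚ) ^ 24 := by
      rw [hCu, Units.coe_prod, map_prod]
      refine Finset.prod_congr rfl fun s hsm => ?_
      have h0 : (Au s) ^ (-24 : ℤ) = ((Au s)⁻¹) ^ (24 : ℕ) := by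
        rw [← zpow_natCast ((Au s)⁻¹) 24, inv_zpow, ← zpow_neg]
        norm_num
      rw [h0, Units.val_pow_eq_pow_val, map_pow, mq_inv]
      congr 2
      rw [Au_val s (mem_Icc.1 hsm).1]
      rw [map_sub, map_one, map_pow, PowerSeries.map_X]
    rw [_root_.C, hs]
  -- Step 2: mod 2, the two integral series agree
  have hmod : m2 ↑Wu = m2 ↑Cu := by
    rw [hWu, hCu, Units.val_mul, Units.coe_prod, Units.coe_prod, Units.coe_prod,
      map_mul, map_prod, map_prod, map_prod, ← Finset.prod_mul_distrib]
    refine Finset.prod_congr rfl fun r hr => ?_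
    have hr1 : 1 ≤ r := (mem_Icc.1 hr).1
    have key : ∀ (u : (PowerSeries ℤ)ˣ) (n : ℤ), m2 ↑(u ^ n)
        = ↑((Units.map (m2 : PowerSeries ℤ →+* PowerSeries (ZMod 2)).toMonoidHom u) ^ n) := by
      intro u n
      rw [← map_zpow, Units.coe_map]
      rfl
    set v : (PowerSeries (ZMod 2))ˣ :=
      Units.map (m2 : PowerSeries ℤ →+* PowerSeries (ZMod 2)).toMonoidHom (Au r) with hv
    have hBv : Units.map (m2 : PowerSeries ℤ →+* PowerSeries (ZMod 2)).toMonoidHom (Bu r) = v := by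
      refine Units.ext ?_
      rw [hv]
      simp only [Units.coe_map, RingHom.toMonoidHom_eq_coe, MonoidHom.coe_coe]
      exact m2_B_eq_A r hr1
    have hA2v : Units.map (m2 : PowerSeries ℤ →+* PowerSeries (ZMod 2)).toMonoidHom (Au (2 * r))
        = v ^ 2 := by
      refine Units.ext ?_
      rw [hv]
      simp only [Units.val_pow_eq_pow_val, Units.coe_map, RingHom.toMonoidHom_eq_coe,
        MonoidHom.coe_coe]
      exact m2_A_two r hr1
    rw [key, key, key, hBv, hA2v, ← hv, ← Units.val_mul]
    congr 1
    have h2 : ((v ^ 2) ^ (-((24 - e) / 2)) : (PowerSeries (ZMod 2))ˣ)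
        = v ^ ((2 : ℤ) * (-((24 - e) / 2))) := by
      rw [← zpow_natCast v 2, ← zpow_mul]
      norm_num
    rw [h2, ← zpow_add]
    congr 1
    obtain ⟨m, hm⟩ := he
    omega
  -- Step 3: conclude
  set wz : ℤ := PowerSeries.coeff (R := ℤ) g ↑Wu with hwz
  set cz : ℤ := PowerSeries.coeff (R := ℤ) g ↑Cu with hcz
  have hdvd : (2 : ℤ) ∣ wz - cz := by
    have h1 : ((wz - cz : ℤ) : ZMod 2) = 0 := by
      have h := congrArg (PowerSeries.coeff (R := ZMod 2) g) hmod
      rw [PowerSeries.coeff_map, PowerSeries.coeff_map] at h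
      push_cast
      rw [hwz, hcz]
      simpa using sub_eq_zero.2 h
    exact (ZMod.intCast_zmod_eq_zero_iff_dvd _ 2).1 h1
  obtain ⟨k, hk⟩ := hdvd
  refine ⟨k, ?_⟩
  rw [hW, hC, PowerSeries.coeff_map, PowerSeries.coeff_map]
  have : ((wz : ℚ)) - (cz : ℚ) = ((2 * k : ℤ) : ℚ) := by
    rw [← hk]; push_cast; ring
  simpa using this
end

section
/- If $e \equiv 0 \pmod 8$, then $w_g \equiv c_g \pmod 8$ for all $g \ge 0$, and $w_g \equiv c_g \equiv 0 \pmod 8$ for all odd $g \ge 1$. -/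
open PowerSeries Finset

/-! ### Auxiliary machinery -/

/-- A power series over `ℤ` with constant coefficient `1` as a unit. -/
noncomputable def U (f : PowerSeries ℤ) (hf : constantCoeff (R := ℤ) f = 1) : (PowerSeries ℤ)ˣ :=
  Units.mkOfMulEqOne f (invOfUnit f 1) (mul_invOfUnit f 1 (by simp [hf]))

abbrev R8 := ZMod 8

noncomputable def psi : PowerSeries ℤ →+* PowerSeries R8 := PowerSeries.map (Int.castRingHom R8)
noncomputable def phi : PowerSeries ℤ →+* PowerSeries ℚ := PowerSeries.map (Int.castRingHom ℚ)

lemma phi_inv (u : (PowerSeries ℤ)ˣ) : (phi ↑u)⁻¹ = phi ↑u⁻¹ := by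
  have hmul : (phi ↑u) * (phi ↑u⁻¹) = 1 := by rw [← map_mul, Units.mul_inv, map_one]
  have hc : constantCoeff (R := ℚ) (phi ↑u) ≠ 0 := by
    intro h
    have := congrArg (constantCoeff (R := ℚ)) hmul
    rw [map_mul, h, zero_mul, map_one] at this
    exact zero_ne_one this
  exact ((PowerSeries.eq_inv_iff_mul_eq_one hc).mpr (by rw [mul_comm]; exact hmul)).symm

lemma zp_unit (u : (PowerSeries ℤ)ˣ) (n : ℤ) : zp (phi ↑u) n = phi ↑(u ^ n) := by
  unfold zp
  split
  · rename_i h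
    rw [← map_pow, ← Units.val_pow_eq_pow_val]
    congr 2
    rw [← zpow_natCast]
    congr 1
    omega
  · rename_i h
    rw [phi_inv, ← map_pow, ← Units.val_pow_eq_pow_val]
    congr 2
    rw [← zpow_natCast, inv_zpow, ← zpow_neg]
    congr 1
    omega

noncomputable def uZ (k : ℕ) : (PowerSeries ℤ)ˣ := U (1 + X ^ (k+1)) (by simp)
noncomputable def wZ (k : ℕ) : (PowerSeries ℤ)ˣ := U (1 - X ^ (k+1)) (by simp)

noncomputable def uR (k : ℕ) : (PowerSeries R8)ˣ := Units.map psi.toMonoidHom (uZ k)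
noncomputable def wR (k : ℕ) : (PowerSeries R8)ˣ := Units.map psi.toMonoidHom (wZ k)

lemma uR_val (k : ℕ) : (uR k : PowerSeries R8) = 1 + X ^ (k+1) := by
  simp [uR, uZ, U, psi]

lemma wR_val (k : ℕ) : (wR k : PowerSeries R8) = 1 - X ^ (k+1) := by
  simp [wR, wZ, U, psi]

lemma uZ_val (k : ℕ) : (uZ k : PowerSeries ℤ) = 1 + X ^ (k+1) := rfl
lemma wZ_val (k : ℕ) : (wZ k : PowerSeries ℤ) = 1 - X ^ (k+1) := rfl

lemma eight_zero : (8 : PowerSeries R8) = 0 := by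
  have h : (8 : R8) = 0 := by decide
  have := congrArg (PowerSeries.C (R := R8)) h
  exact ((map_ofNat (PowerSeries.C (R := R8)) 8).symm.trans this).trans (map_zero _)

lemma key1 (y : PowerSeries R8) : (1 + y) ^ 8 = (1 - y ^ 2) ^ 4 := by
  linear_combination (y + 4*y^2 + 7*y^3 + 8*y^4 + 7*y^5 + 4*y^6 + y^7) * eight_zero

lemma key2 (y : PowerSeries R8) : (1 - y) ^ 8 = (1 - y ^ 2) ^ 4 := by
  linear_combination (-y + 4*y^2 - 7*y^3 + 8*y^4 - 7*y^5 + 4*y^6 - y^7) * eight_zero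

lemma id1 (k : ℕ) : uR k ^ 8 = wR (2*k+1) ^ 4 := by
  ext
  rw [Units.val_pow_eq_pow_val, Units.val_pow_eq_pow_val, uR_val, wR_val, key1, ← pow_mul]
  ring_nf

lemma id2 (k : ℕ) : wR k ^ 8 = wR (2*k+1) ^ 4 := by
  ext
  rw [Units.val_pow_eq_pow_val, Units.val_pow_eq_pow_val, wR_val, wR_val, key2, ← pow_mul]
  ring_nf

lemma fac1 (m : ℤ) (k : ℕ) :
    uR k ^ (-(8*m)) * wR (2*k+1) ^ (-(12-4*m)) = wR (2*k+1) ^ (-12:ℤ) := by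
  have h : uR k ^ (-(8*m)) = wR (2*k+1) ^ (-(4*m)) := by
    rw [show (-(8*m)) = ((8:ℕ):ℤ) * (-m) by norm_num, zpow_mul, zpow_natCast, id1,
      ← zpow_natCast (wR (2*k+1)) 4, ← zpow_mul]
    congr 1
    push_cast
    ring
  rw [h, ← zpow_add]
  congr 1
  ring

lemma fac2 (k : ℕ) : wR k ^ (-24:ℤ) = wR (2*k+1) ^ (-12:ℤ) := by
  rw [show (-24:ℤ) = ((8:ℕ):ℤ) * (-3) by norm_num, zpow_mul, zpow_natCast, id2,
    ← zpow_natCast (wR (2*k+1)) 4, ← zpow_mul]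
  norm_num

/-! ### Even-supported power series -/

def Ev (f : PowerSeries R8) : Prop := ∀ n : ℕ, Odd n → coeff (R := R8) n f = 0

lemma Ev_one : Ev 1 := by
  intro n hn
  rw [coeff_one, if_neg (by rintro rfl; simp at hn)]

lemma Ev_mul {f g : PowerSeries R8} (hf : Ev f) (hg : Ev g) : Ev (f * g) := by
  intro n hn
  rw [coeff_mul]
  apply Finset.sum_eq_zero
  rintro ⟨i, j⟩ hij
  rw [Finset.HasAntidiagonal.mem_antidiagonal] at hij
  rcases Nat.even_or_odd i with hi | hi
  · have : Odd j := by rcases hi with ⟨a, ha⟩; rcases hn with ⟨b, hb⟩; exact ⟨b - a, by omega⟩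
    simp [hg j this]
  · simp [hf i hi]

lemma Ev_pow {f : PowerSeries R8} (hf : Ev f) (k : ℕ) : Ev (f ^ k) := by
  induction k with
  | zero => simpa using Ev_one
  | succ k ih => rw [pow_succ]; exact Ev_mul ih hf

lemma Ev_inv {u : (PowerSeries R8)ˣ} (hu : Ev ↑u) : Ev ↑u⁻¹ := by
  set h : PowerSeries R8 := ↑u⁻¹ with hh
  set hE : PowerSeries R8 := PowerSeries.mk (fun n => if Even n then coeff (R := R8) n h else 0) with hhE
  have hEv : Ev hE := by
    intro n hn
    rw [hhE, coeff_mk, if_neg (Nat.not_even_iff_odd.mpr hn)]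
  have hzero : (↑u : PowerSeries R8) * (h - hE) = 0 := by
    ext n
    rcases Nat.even_or_odd n with hn | hn
    · rw [coeff_mul, map_zero]
      apply Finset.sum_eq_zero
      rintro ⟨i, j⟩ hij
      rw [Finset.HasAntidiagonal.mem_antidiagonal] at hij
      rcases Nat.even_or_odd j with hj | hj
      · have : coeff (R := R8) j (h - hE) = 0 := by
          rw [map_sub, hhE, coeff_mk, if_pos hj, sub_self]
        simp [this]
      · have hi : Odd i := by
          rcases hn with ⟨a, ha⟩; rcases hj with ⟨b, hb⟩; exact ⟨a - b - 1, by omega⟩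
        simp [hu i hi]
    · have h1 : (↑u : PowerSeries R8) * (h - hE) = 1 - ↑u * hE := by
        rw [mul_sub]
        congr 1
        rw [hh, Units.mul_inv]
      rw [h1, map_sub, map_zero, coeff_one, if_neg (by rintro rfl; simp at hn),
        Ev_mul hu hEv n hn, sub_zero]
  have hsub : h - hE = 0 := (Units.mul_right_eq_zero u).mp hzero
  have heq : h = hE := by rwa [sub_eq_zero] at hsub
  intro n hn
  rw [hh] at heq ⊢
  rw [heq]
  exact hEv n hn

lemma Ev_zpow {u : (PowerSeries R8)ˣ} (hu : Ev ↑u) (n : ℤ) : Ev ↑(u ^ n) := by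
  rcases le_or_gt 0 n with h | h
  · rw [show n = (n.toNat : ℤ) by omega, zpow_natCast, Units.val_pow_eq_pow_val]
    exact Ev_pow hu _
  · rw [show n = -((-n).toNat : ℤ) by omega, zpow_neg, zpow_natCast, ← inv_pow,
      Units.val_pow_eq_pow_val]
    exact Ev_pow (Ev_inv hu) _

lemma Ev_wR (k : ℕ) : Ev ↑(wR (2*k+1)) := by
  intro n hn
  rw [wR_val, map_sub, coeff_one, coeff_X_pow, if_neg (by rintro rfl; simp at hn),
    if_neg (by rintro rfl; rcases hn with ⟨b, hb⟩; omega), sub_zero]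

/-! ### Assembly -/

noncomputable def AW (e : ℤ) (k : ℕ) : PowerSeries ℤ :=
  ↑(uZ k ^ (-e) * wZ (2*k+1) ^ (-((24-e)/2)))

noncomputable def AC (k : ℕ) : PowerSeries ℤ := ↑(wZ k ^ (-24:ℤ))

lemma prod_shift {M : Type*} [CommMonoid M] (g : ℕ) (F : ℕ → M) :
    ∏ r ∈ Icc 1 g, F r = ∏ i ∈ range g, F (i+1) := by
  rw [← Finset.Ico_add_one_right_eq_Icc, Finset.prod_Ico_eq_prod_range]
  simp [add_comm]

lemma W_eq_s10 (e : ℤ) (g : ℕ) : W e g = ((coeff (R := ℤ) g (∏ i ∈ range g, AW e i) : ℤ) : ℚ) := by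
  unfold W
  rw [prod_shift g (fun r => zp (1 + PowerSeries.X ^ r) (-e)),
    prod_shift g (fun s => zp (1 - PowerSeries.X ^ (2*s)) (-((24-e)/2)))]
  have h1 : ∀ i : ℕ, zp (1 + PowerSeries.X ^ (i+1) : PowerSeries ℚ) (-e) = phi ↑(uZ i ^ (-e)) := by
    intro i
    rw [← zp_unit]
    congr 1
    simp [uZ_val, phi]
  have h2 : ∀ i : ℕ, zp (1 - PowerSeries.X ^ (2*(i+1)) : PowerSeries ℚ) (-((24-e)/2))
      = phi ↑(wZ (2*i+1) ^ (-((24-e)/2))) := by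
    intro i
    rw [← zp_unit]
    congr 1
    rw [wZ_val, show (2*i+1)+1 = 2*(i+1) by ring]
    simp [phi]
  simp only [h1, h2]
  rw [← map_prod, ← map_prod, ← map_mul, ← Finset.prod_mul_distrib]
  have h3 : ∀ i ∈ range g,
      (↑(uZ i ^ (-e)) * ↑(wZ (2*i+1) ^ (-((24-e)/2))) : PowerSeries ℤ) = AW e i :=
    fun i _ => (Units.val_mul _ _).symm
  rw [Finset.prod_congr rfl h3]
  simp only [phi, PowerSeries.coeff_map]
  simp

lemma C_eq (g : ℕ) : _root_.C g = ((coeff (R := ℤ) g (∏ i ∈ range g, AC i) : ℤ) : ℚ) := by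
  unfold _root_.C
  rw [prod_shift g (fun s => ((1 - PowerSeries.X ^ s)⁻¹) ^ 24)]
  have h1 : ∀ i : ℕ, (((1 - PowerSeries.X ^ (i+1) : PowerSeries ℚ))⁻¹) ^ 24 = phi (AC i) := by
    intro i
    have hw : (1 - PowerSeries.X ^ (i+1) : PowerSeries ℚ) = phi ↑(wZ i) := by
      rw [wZ_val]; simp [phi]
    rw [hw, phi_inv, ← map_pow, ← Units.val_pow_eq_pow_val]
    unfold AC
    rw [show ((wZ i)⁻¹ ^ (24:ℕ) : (PowerSeries ℤ)ˣ) = wZ i ^ (-24:ℤ) from by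
      rw [← zpow_natCast, inv_zpow, ← zpow_neg]; norm_num]
  simp only [h1]
  rw [← map_prod]
  simp only [phi, PowerSeries.coeff_map]
  simp

lemma psi_AW (e m : ℤ) (hm : e = 8*m) (k : ℕ) :
    psi (AW e k) = ↑(wR (2*k+1) ^ (-12:ℤ)) := by
  unfold AW
  rw [show psi ↑(uZ k ^ (-e) * wZ (2*k+1) ^ (-((24-e)/2)))
      = ↑(Units.map psi.toMonoidHom (uZ k ^ (-e) * wZ (2*k+1) ^ (-((24-e)/2)))) from rfl]
  rw [map_mul, map_zpow, map_zpow]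
  have he2 : -((24-e)/2) = -(12 - 4*m) := by omega
  rw [he2, hm]
  exact congrArg Units.val (fac1 m k)

lemma psi_AC (k : ℕ) : psi (AC k) = ↑(wR (2*k+1) ^ (-12:ℤ)) := by
  unfold AC
  rw [show psi ↑(wZ k ^ (-24:ℤ)) = ↑(Units.map psi.toMonoidHom (wZ k ^ (-24:ℤ))) from rfl]
  rw [map_zpow]
  exact congrArg Units.val (fac2 k)

theorem stmt10 (e : ℤ) (he : (8 : ℤ) ∣ e) :
    (∀ g : ℕ, ∃ k : ℤ, W e g - _root_.C g = 8 * k) ∧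
    (∀ g : ℕ, 1 ≤ g → Odd g →
      (∃ k : ℤ, W e g = 8 * k) ∧ (∃ k : ℤ, _root_.C g = 8 * k)) := by
  obtain ⟨m, hm⟩ := he
  have hpsi : ∀ g : ℕ, psi (∏ i ∈ range g, AW e i) = ∏ i ∈ range g, (↑(wR (2*i+1) ^ (-12:ℤ)) : PowerSeries R8) := by
    intro g
    rw [map_prod]
    exact Finset.prod_congr rfl fun i _ => psi_AW e m hm i
  have hpsiC : ∀ g : ℕ, psi (∏ i ∈ range g, AC i) = ∏ i ∈ range g, (↑(wR (2*i+1) ^ (-12:ℤ)) : PowerSeries R8) := by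
    intro g
    rw [map_prod]
    exact Finset.prod_congr rfl fun i _ => psi_AC i
  have hEv : ∀ g : ℕ, Ev (∏ i ∈ range g, (↑(wR (2*i+1) ^ (-12:ℤ)) : PowerSeries R8)) := by
    intro g
    refine Finset.prod_induction _ Ev (fun _ _ => Ev_mul) Ev_one fun i _ => ?_
    exact Ev_zpow (Ev_wR i) _
  have hcast : ∀ (F : PowerSeries ℤ) (g : ℕ),
      ((coeff (R := ℤ) g F : ℤ) : R8) = coeff (R := R8) g (psi F) := by
    intro F g
    simp [psi, PowerSeries.coeff_map]
  constructor
  · intro g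
    set a := coeff (R := ℤ) g (∏ i ∈ range g, AW e i) with ha
    set b := coeff (R := ℤ) g (∏ i ∈ range g, AC i) with hb
    have hab : ((a - b : ℤ) : R8) = 0 := by
      push_cast
      rw [hcast, hcast, hpsi g, hpsiC g, sub_self]
    have hdvd : (8 : ℤ) ∣ a - b := by
      have := (ZMod.intCast_zmod_eq_zero_iff_dvd (a - b) 8).mp hab
      exact_mod_cast this
    obtain ⟨k, hk⟩ := hdvd
    refine ⟨k, ?_⟩
    rw [W_eq_s10, C_eq, ← ha, ← hb]
    have : (a:ℚ) - b = ((a - b : ℤ):ℚ) := by push_cast; ring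
    rw [this, hk]
    push_cast
    ring
  · intro g _ hg
    constructor
    · set a := coeff (R := ℤ) g (∏ i ∈ range g, AW e i) with ha
      have h0 : ((a : ℤ) : R8) = 0 := by
        rw [hcast, hpsi g]
        exact hEv g g hg
      have hdvd : (8 : ℤ) ∣ a := by
        have := (ZMod.intCast_zmod_eq_zero_iff_dvd a 8).mp h0
        exact_mod_cast this
      obtain ⟨k, hk⟩ := hdvd
      refine ⟨k, ?_⟩
      rw [W_eq_s10, ← ha, hk]
      push_cast
      ring
    · set b := coeff (R := ℤ) g (∏ i ∈ range g, AC i) with hb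
      have h0 : ((b : ℤ) : R8) = 0 := by
        rw [hcast, hpsiC g]
        exact hEv g g hg
      have hdvd : (8 : ℤ) ∣ b := by
        have := (ZMod.intCast_zmod_eq_zero_iff_dvd b 8).mp h0
        exact_mod_cast this
      obtain ⟨k, hk⟩ := hdvd
      refine ⟨k, ?_⟩
      rw [C_eq, ← hb, hk]
      push_cast
      ring
end

section
/- There exist formal power series $A, B \in \mathbb{Z}[[q]]$ with constant term of $A$ equal to 1, such that $\prod_{n \ge 1}(1-q^n)^3 = A(q^3) + 3q\,B(q^3)$. -/
open Finset Polynomial LaurentPolynomial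

namespace Stmt15aux
noncomputable section


def tri : ℕ → ℕ
  | 0 => 0
  | n+1 => tri n + n

def gb : ℕ → ℕ → Polynomial ℤ
  | 0, 0 => 1
  | 0, _+1 => 0
  | m+1, 0 => gb m 0
  | m+1, j+1 => gb m (j+1) + X ^ (m - j) * gb m j

lemma gb_zero : ∀ m j, m < j → gb m j = 0
  | 0, _+1, _ => rfl
  | m+1, j+1, h => by
    rw [gb, gb_zero m (j+1) (by omega), gb_zero m j (by omega)]
    ring

lemma gb_zero_zero : ∀ m, gb m 0 = 1
  | 0 => rfl
  | m+1 => gb_zero_zero m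

lemma two_tri_succ : ∀ n, 2 * tri (n+1) = (n+1) * n
  | 0 => rfl
  | n+1 => by
    show 2 * (tri (n+1) + (n+1)) = _
    rw [mul_add, two_tri_succ n]; ring

lemma tri_ge (n : ℕ) : n ≤ tri (n+1) := by
  induction n with
  | zero => simp
  | succ k ih => show _ ≤ tri (k+1) + (k+1); omega

lemma gauss {R} [CommRing R] (z q : R) : ∀ m, ∏ k ∈ range m, (1 + z * q ^ k)
    = ∑ j ∈ range (m+1), aeval q (gb m j) * q ^ tri j * z ^ j
  | 0 => by simp [tri, gb]
  | m+1 => by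
    have h2 : ∀ j, j < m + 1 → q ^ (m - j) * q ^ (tri j + j) = q ^ tri j * q ^ m := by
      intro j hj
      rw [← pow_add, ← pow_add]; congr 1; omega
    have key : ∀ j ∈ range (m+1),
        aeval q (gb (m+1) (j+1)) * q ^ tri (j+1) * z ^ (j+1)
          = aeval q (gb m (j+1)) * q ^ tri (j+1) * z ^ (j+1)
            + (aeval q (gb m j) * q ^ tri j * z ^ j) * (z * q ^ m) := by
      intro j hj
      rw [mem_range] at hj
      rw [gb, map_add, map_mul, aeval_X_pow, show tri (j+1) = tri j + j from rfl,
        pow_succ]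
      linear_combination (aeval q (gb m j) * z ^ j * z) * h2 j hj
    have hfold : (∑ x ∈ range (m+1),
          aeval q (gb m (x+1)) * q ^ tri (x+1) * z ^ (x+1))
          + aeval q (gb m 0) * q ^ tri 0 * z ^ 0
        = ∑ j ∈ range (m+2), aeval q (gb m j) * q ^ tri j * z ^ j :=
      (sum_range_succ' (fun j => aeval q (gb m j) * q ^ tri j * z ^ j) (m+1)).symm
    rw [prod_range_succ, gauss z q m, sum_range_succ' _ (m+1), sum_congr rfl key,
      sum_add_distrib, ← sum_mul, show gb (m+1) 0 = gb m 0 from rfl,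
      add_right_comm, hfold, sum_range_succ _ (m+1), gb_zero m (m+1) (by omega)]
    simp only [map_zero, zero_mul, add_zero]
    ring


/-- `D k = ∏_{i=1}^{k} (1 - X^i)` -/
def D (k : ℕ) : Polynomial ℤ := ∏ i ∈ range k, (1 - X ^ (i+1))

/-- `N m j = ∏_{i=m-j+1}^{m} (1 - X^i)` -/
def N (m j : ℕ) : Polynomial ℤ := ∏ i ∈ range j, (1 - X ^ (m - i))

lemma DgbN : ∀ m j, j ≤ m → D j * gb m j = N m j := by
  intro m
  induction m with
  | zero => intro j hj; interval_cases j; simp [D, N, gb]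
  | succ m ih =>
    intro j hj
    match j, hj with
    | 0, _ => simp [D, N, gb_zero_zero]
    | j+1, hj =>
      have hN : N (m+1) (j+1) = N m j * (1 - X ^ (m+1)) := by
        rw [N, prod_range_succ' (fun i => 1 - X ^ (m + 1 - i)) j, N]
        congr 1
        exact prod_congr rfl fun i hi => by rw [mem_range] at hi; congr 2; omega
      have hD : D (j+1) = D j * (1 - X ^ (j+1)) := prod_range_succ _ j
      have h2 : D j * gb m j = N m j := ih j (by omega)
      rw [gb]
      rcases Nat.lt_or_ge j m with hjm | hjm
      · have h1 : D (j+1) * gb m (j+1) = N m (j+1) := ih (j+1) hjm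
        have hNsucc : N m (j+1) = N m j * (1 - X ^ (m - j)) := prod_range_succ _ j
        have hxp : (X : Polynomial ℤ) ^ (m - j) * X ^ (j+1) = X ^ (m+1) := by
          rw [← pow_add]; congr 1; omega
        linear_combination h1 + X ^ (m-j) * gb m j * hD + X ^ (m-j) * (1 - X ^ (j+1)) * h2
          + hNsucc - N m j * hxp - hN
      · have hjm' : j = m := by omega
        subst hjm'
        have hz : gb j (j+1) = 0 := gb_zero j (j+1) (by omega)
        rw [Nat.sub_self, pow_zero]
        linear_combination D (j+1) * hz + gb j j * hD + (1 - X ^ (j+1)) * h2 - hN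

/-- product of things ≡ 1 mod X^c -/
lemma dvd_prod_sub_one {c : ℕ} {s : Finset ℕ} {f : ℕ → Polynomial ℤ}
    (h : ∀ i ∈ s, (X : Polynomial ℤ) ^ c ∣ f i - 1) :
    (X : Polynomial ℤ) ^ c ∣ (∏ i ∈ s, f i) - 1 := by
  classical
  induction s using Finset.cons_induction with
  | empty => simp
  | cons a s ha ih =>
    rw [prod_cons]
    have h1 := h a (mem_cons_self a s)
    have h2 := ih fun i hi => h i (mem_cons.2 (Or.inr hi))
    have : f a * (∏ i ∈ s, f i) - 1
        = f a * ((∏ i ∈ s, f i) - 1) + (f a - 1) := by ring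
    rw [this]
    exact dvd_add (Dvd.dvd.mul_left h2 _) h1

lemma dvd_D_div (c a b : ℕ) (hab : a ≤ b) (hc : c ≤ a + 1) :
    (X : Polynomial ℤ) ^ c ∣ (∏ i ∈ Ico a b, (1 - X ^ (i+1))) - 1 := by
  apply dvd_prod_sub_one
  intro i hi
  rw [mem_Ico] at hi
  have : (1 : Polynomial ℤ) - X ^ (i+1) - 1 = -(X ^ (i+1)) := by ring
  rw [this, dvd_neg]
  exact pow_dvd_pow _ (by omega)

lemma D_split (a b : ℕ) (hab : a ≤ b) :
    D b = D a * ∏ i ∈ Ico a b, (1 - X ^ (i+1)) := by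
  rw [D, D, ← prod_range_mul_prod_Ico _ hab]

/-- Key congruence: `X^c ∣ D K * gb m j - 1`. -/
lemma Egb_cong (K m j c : ℕ) (hc1 : c ≤ j + 1) (hc2 : c + j ≤ m + 1) (hc3 : c ≤ K + 1) :
    (X : Polynomial ℤ) ^ c ∣ D K * gb m j - 1 := by
  rcases Nat.eq_zero_or_pos c with rfl | hcpos
  · simp
  have hjm : j ≤ m := by omega
  have hNgb := DgbN m j hjm
  have hN1 : (X : Polynomial ℤ) ^ c ∣ N m j - 1 := by
    apply dvd_prod_sub_one
    intro i hi
    rw [mem_range] at hi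
    have : (1 : Polynomial ℤ) - X ^ (m - i) - 1 = -(X ^ (m - i)) := by ring
    rw [this, dvd_neg]
    exact pow_dvd_pow _ (by omega)
  rcases le_or_gt j K with hjK | hjK
  · -- D K = D j * R, R ≡ 1
    have hsplit := D_split j K hjK
    have hR : (X : Polynomial ℤ) ^ c ∣ (∏ i ∈ Ico j K, (1 - X ^ (i+1))) - 1 :=
      dvd_D_div c j K hjK hc1
    -- D K * gb m j - 1 = (R - 1) * (D j * gb m j) + (N m j - 1)
    have : D K * gb m j - 1
        = ((∏ i ∈ Ico j K, (1 - X ^ (i+1))) - 1) * (D j * gb m j) + (N m j - 1) := by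
      linear_combination gb m j * hsplit + hNgb
    rw [this]
    exact dvd_add (Dvd.dvd.mul_right hR _) hN1
  · -- D j = D K * R', R' ≡ 1
    have hsplit := D_split K j (le_of_lt hjK)
    have hR : (X : Polynomial ℤ) ^ c ∣ (∏ i ∈ Ico K j, (1 - X ^ (i+1))) - 1 :=
      dvd_D_div c K j (le_of_lt hjK) hc3
    have : D K * gb m j - 1
        = (N m j - 1) - (D K * gb m j) * ((∏ i ∈ Ico K j, (1 - X ^ (i+1))) - 1) := by
      linear_combination hNgb - gb m j * hsplit
    rw [this]
    exact dvd_sub hN1 (Dvd.dvd.mul_left hR _)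


/-- the exponent `(j-n)(j-n-1)/2` -/
def e (n j : ℕ) : ℕ := if n ≤ j then tri (j - n) else tri (n - j + 1)

lemma two_tri_cast (s : ℕ) : (2 : ℤ) * tri s = s * (s - 1) := by
  cases s with
  | zero => simp [tri]
  | succ k =>
    have h' : (2 : ℤ) * tri (k+1) = (k+1) * k := by exact_mod_cast two_tri_succ k
    rw [h']
    push_cast
    ring

lemma e_cast (n j : ℕ) : (tri (n+1) : ℤ) + tri j - n * j = e n j := by
  have h1 := two_tri_cast (n+1)
  have h2 := two_tri_cast j
  rcases le_or_gt n j with h | h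
  · have h3 := two_tri_cast (j - n)
    rw [e, if_pos h]
    have hc : ((j - n : ℕ) : ℤ) = j - n := by omega
    rw [hc] at h3
    push_cast at h1 h2 h3 ⊢
    nlinarith [h1, h2, h3]
  · have h3 := two_tri_cast (n - j + 1)
    rw [e, if_neg (by omega)]
    have hc : ((n - j + 1 : ℕ) : ℤ) = n - j + 1 := by omega
    rw [hc] at h3
    push_cast at h1 h2 h3 ⊢
    nlinarith [h1, h2, h3]

lemma sum_range_succ_add (n : ℕ) : ∑ j ∈ range n, (j + 1) = tri (n+1) := by
  induction n with
  | zero => rfl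
  | succ k ih => rw [sum_range_succ, ih]; show _ = tri (k+1) + (k+1); omega

lemma aeval_T_one (p : Polynomial ℤ) : aeval (T 1 : LaurentPolynomial ℤ) p = toLaurent p := by
  induction p using Polynomial.induction_on' with
  | add p q hp hq => rw [map_add, map_add, hp, hq]
  | monomial k a =>
    rw [aeval_monomial, toLaurent_C_mul_T, T_pow, mul_one]
    rw [LaurentPolynomial.C_eq_algebraMap]

lemma aeval_C_C (l : LaurentPolynomial ℤ) (p : Polynomial ℤ) :
    aeval (Polynomial.C l) p = Polynomial.C (aeval l p) := by
  induction p using Polynomial.induction_on' with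
  | add p q hp hq => simp [hp, hq]
  | monomial k a =>
    rw [aeval_monomial, aeval_monomial, map_mul, ← map_pow]
    congr 1

/-- The finite Jacobi triple product style identity. -/
lemma F_id (n : ℕ) :
    (∏ k ∈ range n, (Polynomial.C ((X : Polynomial ℤ) ^ (n - k)) - Polynomial.X)) *
      (∏ i ∈ range n, (1 - Polynomial.X * Polynomial.C ((X : Polynomial ℤ) ^ i)))
    = ∑ j ∈ range (2*n+1),
        (-1) ^ j * Polynomial.C (gb (2*n) j * (X : Polynomial ℤ) ^ e n j) * Polynomial.X ^ j := by
  apply Polynomial.map_injective (toLaurent : Polynomial ℤ →+* LaurentPolynomial ℤ)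
    toLaurent_injective
  rw [Polynomial.map_mul, Polynomial.map_prod, Polynomial.map_prod, Polynomial.map_sum]
  set u : Polynomial (LaurentPolynomial ℤ) := Polynomial.C (T 1) with hu
  set z : Polynomial (LaurentPolynomial ℤ) := -Polynomial.X * Polynomial.C (T (-(n:ℤ))) with hz
  have hCT : ∀ a : ℕ, Polynomial.C (T (a:ℤ)) = u ^ a := by
    intro a
    rw [hu, ← map_pow, T_pow, mul_one]
  have hzun : z * u ^ n = -Polynomial.X := by
    rw [hz, ← hCT n, show (-Polynomial.X * Polynomial.C ((T (-(n:ℤ)) : LaurentPolynomial ℤ)))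
          * Polynomial.C (T (n:ℤ))
        = -Polynomial.X * (Polynomial.C ((T (-(n:ℤ)) : LaurentPolynomial ℤ))
          * Polynomial.C (T (n:ℤ))) from by ring,
      ← map_mul, ← T_add, neg_add_cancel, T_zero, map_one, mul_one]
  -- LHS
  have hL : (∏ k ∈ range n,
        (Polynomial.C ((X : Polynomial ℤ) ^ (n - k)) - Polynomial.X).map toLaurent) *
      (∏ i ∈ range n, ((1 : Polynomial (Polynomial ℤ)) - Polynomial.X *
        Polynomial.C ((X : Polynomial ℤ) ^ i)).map toLaurent)
      = Polynomial.C (T (tri (n+1) : ℤ)) * ∏ k ∈ range (2*n), (1 + z * u ^ k) := by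
    rw [two_mul, prod_range_add]
    have h2 : ∀ k ∈ range n, (1 + z * u ^ (n + k))
        = ((1 : Polynomial (Polynomial ℤ)) - Polynomial.X *
            Polynomial.C ((X : Polynomial ℤ) ^ k)).map toLaurent := by
      intro k hk
      rw [Polynomial.map_sub, Polynomial.map_one, Polynomial.map_mul, Polynomial.map_X,
        Polynomial.map_C, toLaurent_X_pow, hz, pow_add, ← mul_assoc, ← hCT n, ← hCT k]
      rw [mul_assoc (-Polynomial.X), ← map_mul, ← T_add]
      have : -(n:ℤ) + n = 0 := by ring
      rw [this, T_zero, map_one, mul_one]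
      ring
    rw [prod_congr rfl h2]
    have hsum : ∑ k ∈ range n, (n - k) = tri (n+1) := by
      rw [← sum_range_succ_add n, ← sum_range_reflect (fun j => j + 1) n]
      exact sum_congr rfl fun j hj => by rw [mem_range] at hj; omega
    have hCTT : Polynomial.C (T (tri (n+1) : ℤ)) = ∏ k ∈ range n, u ^ (n - k) := by
      rw [prod_pow_eq_pow_sum, hsum, hCT]
    have h1 : ∀ k ∈ range n, u ^ (n - k) * (1 + z * u ^ k)
        = (Polynomial.C ((X : Polynomial ℤ) ^ (n - k)) - Polynomial.X).map toLaurent := by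
      intro k hk
      rw [mem_range] at hk
      rw [Polynomial.map_sub, Polynomial.map_C, Polynomial.map_X, toLaurent_X_pow, hCT]
      have : u ^ (n - k) * (z * u ^ k) = z * u ^ n := by
        rw [← mul_assoc, mul_comm _ z, mul_assoc, ← pow_add]
        congr 2
        omega
      rw [mul_add, mul_one, this, hzun]
      ring
    have hA : (∏ k ∈ range n,
          (Polynomial.C ((X : Polynomial ℤ) ^ (n - k)) - Polynomial.X).map toLaurent)
        = Polynomial.C (T (tri (n+1):ℤ)) * ∏ k ∈ range n, (1 + z * u ^ k) := by
      rw [hCTT, ← prod_mul_distrib]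
      exact prod_congr rfl fun k hk => (h1 k hk).symm
    rw [hA]
    ring
  rw [hL, gauss z u (2*n), mul_sum]
  -- RHS, termwise
  apply sum_congr rfl
  intro j hj
  rw [mem_range] at hj
  have haev : aeval u (gb (2*n) j) = Polynomial.C (toLaurent (gb (2*n) j)) := by
    rw [hu, aeval_C_C, aeval_T_one]
  have hzj : z ^ j = (-1 : Polynomial (LaurentPolynomial ℤ)) ^ j * Polynomial.X ^ j *
      Polynomial.C (T ((j : ℤ) * (-(n:ℤ)))) := by
    rw [hz, ← T_pow, map_pow]
    ring
  have hexp : (tri (n+1) : ℤ) + tri j + (j:ℤ) * -(n:ℤ) = (e n j : ℤ) := by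
    linarith [e_cast n j]
  have hC4 : Polynomial.C (T (tri (n+1):ℤ)) * Polynomial.C (T (tri j:ℤ))
      * Polynomial.C (T ((j:ℤ) * -(n:ℤ))) * Polynomial.C (toLaurent (gb (2*n) j))
      = Polynomial.C (toLaurent (gb (2*n) j) * T (e n j : ℤ)) := by
    rw [← map_mul, ← map_mul, ← map_mul, ← T_add, ← T_add, hexp]
    exact congrArg _ (mul_comm _ _)
  rw [Polynomial.map_mul, Polynomial.map_mul, Polynomial.map_pow, Polynomial.map_neg,
    Polynomial.map_one, Polynomial.map_C, Polynomial.map_pow, Polynomial.map_X, map_mul,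
    toLaurent_X_pow]
  erw [haev]
  calc Polynomial.C (T (tri (n+1):ℤ)) *
        (Polynomial.C (toLaurent (gb (2*n) j)) * u ^ tri j * z ^ j)
      = Polynomial.C (T (tri (n+1):ℤ)) * Polynomial.C (T (tri j:ℤ))
          * Polynomial.C (T ((j:ℤ) * -(n:ℤ))) * Polynomial.C (toLaurent (gb (2*n) j))
          * ((-1) ^ j * Polynomial.X ^ j) := by
        rw [hzj, ← hCT (tri j)]; ring
    _ = (-1) ^ j * Polynomial.C (toLaurent (gb (2*n) j) * T (e n j : ℤ)) * Polynomial.X ^ j := by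
        rw [hC4]; ring


lemma neg_one_pow_congr {a b : ℕ} (h : a % 2 = b % 2) : ((-1:ℤ))^a = (-1)^b := by
  rcases Nat.even_or_odd a with ha | ha
  · rw [ha.neg_one_pow, (Nat.even_iff.2 (by rw [← h]; exact Nat.even_iff.1 ha)).neg_one_pow]
  · rw [ha.neg_one_pow, (Nat.odd_iff.2 (by rw [← h]; exact Nat.odd_iff.1 ha)).neg_one_pow]

lemma pair_coeff (M j : ℕ) (hj : j < M+1) :
    ((-1:ℤ))^(M+1+(j+1)) * (M+1+(j+1)) + (-1)^(M+1-j) * ((M+1-j : ℕ):ℤ)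
      = (-1)^M * ((-1)^j * (2*j+1)) := by
  have h1 : ((-1:ℤ))^(M+1+(j+1)) = (-1)^(M+j) := neg_one_pow_congr (by omega)
  have h2 : ((-1:ℤ))^(M+1-j) = (-1)^(M+j+1) := neg_one_pow_congr (by omega)
  have h3 : ((-1:ℤ))^(M+j+1) = -((-1)^(M+j)) := by rw [pow_succ]; ring
  have h4 : ((-1:ℤ))^(M+j) = (-1)^M * (-1)^j := pow_add _ _ _
  have hc : ((M+1-j : ℕ):ℤ) = (M:ℤ)+1-j := by omega
  rw [h1, h2, h3, h4, hc]
  push_cast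
  ring
lemma tri_ge' : ∀ s : ℕ, s ≤ tri s + 1
  | 0 => by simp
  | s+1 => by have := tri_ge s; omega

lemma e_n_add (n j : ℕ) : e n (n + j) = tri j := by
  rw [e, if_pos (by omega)]; congr 1; omega

lemma e_n_sub (n j : ℕ) (hj : j < n) : e n (n - j) = tri (j + 1) := by
  rcases Nat.eq_zero_or_pos j with rfl | hj0
  · rw [Nat.sub_zero, e, if_pos le_rfl, Nat.sub_self]
    show tri 0 = tri 1
    rfl
  · rw [e, if_neg (by omega)]; congr 1; omega

/-- finite Jacobi identity mod X^(M+1) -/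
lemma jacobi (M : ℕ) :
    (X : Polynomial ℤ) ^ (M+1) ∣
      (D M) ^ 3 - ∑ t ∈ range (M+1), Polynomial.C ((-1)^t * (2*t+1) : ℤ) * X ^ tri (t+1) := by
  set n := M + 1 with hn
  -- Step a : congruence in Polynomial (Polynomial ℤ)
  have ha : (Polynomial.C ((X : Polynomial ℤ)^(M+1)) : Polynomial (Polynomial ℤ)) ∣
      Polynomial.C (D M) * ((∏ k ∈ range n, (Polynomial.C ((X : Polynomial ℤ) ^ (n - k)) - Polynomial.X)) *
        (∏ i ∈ range n, (1 - Polynomial.X * Polynomial.C ((X : Polynomial ℤ) ^ i))))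
      - ∑ j ∈ range (2*n+1), (-1)^j * Polynomial.C ((X : Polynomial ℤ) ^ e n j) * Polynomial.X ^ j := by
    rw [F_id n, mul_sum, ← sum_sub_distrib]
    apply dvd_sum
    intro j hj
    rw [mem_range] at hj
    have hterm : (-1 : Polynomial (Polynomial ℤ))^j * Polynomial.C (D M) *
          (Polynomial.C (gb (2*n) j * (X : Polynomial ℤ) ^ e n j) * Polynomial.X ^ j)
          - (-1)^j * Polynomial.C ((X : Polynomial ℤ) ^ e n j) * Polynomial.X ^ j
        = (-1)^j * Polynomial.C ((D M * gb (2*n) j - 1) * (X : Polynomial ℤ) ^ e n j)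
            * Polynomial.X ^ j := by
      rw [map_mul, map_mul, map_sub, map_mul, map_one]
      ring
    rw [show Polynomial.C (D M) * ((-1 : Polynomial (Polynomial ℤ))^j *
          Polynomial.C (gb (2*n) j * (X : Polynomial ℤ) ^ e n j) * Polynomial.X ^ j)
        = (-1 : Polynomial (Polynomial ℤ))^j * Polynomial.C (D M) *
          (Polynomial.C (gb (2*n) j * (X : Polynomial ℤ) ^ e n j) * Polynomial.X ^ j) from by ring,
      hterm]
    have hdvd : (X : Polynomial ℤ)^(M+1) ∣ (D M * gb (2*n) j - 1) * (X : Polynomial ℤ) ^ e n j := by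
      rcases le_or_gt (M+1) (e n j) with he | he
      · exact Dvd.dvd.mul_left (pow_dvd_pow _ he) _
      · have hb1 : M ≤ e n j + j := by
          rw [e]
          split
          · have := tri_ge' (j - n); omega
          · have := tri_ge (n - j); omega
        have hb2 : M + 1 - e n j + j ≤ 2*n + 1 := by
          rw [e]
          split
          · have := tri_ge' (j - n); omega
          · omega
        have h := Egb_cong M (2*n) j (M + 1 - e n j) (by omega) (by omega) (by omega)
        have : (X : Polynomial ℤ)^(M+1-e n j) * (X : Polynomial ℤ)^(e n j) = X^(M+1) := by
          rw [← pow_add]; congr 1; omega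
        calc (X : Polynomial ℤ)^(M+1) = X^(M+1-e n j) * X^(e n j) := this.symm
          _ ∣ (D M * gb (2*n) j - 1) * (X : Polynomial ℤ) ^ e n j := mul_dvd_mul h dvd_rfl
    rw [mul_assoc]
    exact Dvd.dvd.mul_left (Dvd.dvd.mul_right (_root_.map_dvd (Polynomial.C (R := Polynomial ℤ)) hdvd) _) _
  obtain ⟨H, hH⟩ := ha
  -- Step b : differentiate and evaluate at 1
  have hb : Polynomial.eval (1 : Polynomial ℤ) (Polynomial.derivative
        (Polynomial.C (D M) * ((∏ k ∈ range n, (Polynomial.C ((X : Polynomial ℤ) ^ (n - k)) - Polynomial.X)) *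
          (∏ i ∈ range n, (1 - Polynomial.X * Polynomial.C ((X : Polynomial ℤ) ^ i))))))
      - Polynomial.eval (1 : Polynomial ℤ) (Polynomial.derivative
        (∑ j ∈ range (2*n+1), (-1)^j * Polynomial.C ((X : Polynomial ℤ) ^ e n j) * Polynomial.X ^ j))
      = (X : Polynomial ℤ)^(M+1) *
          Polynomial.eval (1 : Polynomial ℤ) (Polynomial.derivative H) := by
    have hd := congrArg (fun p => Polynomial.eval (1 : Polynomial ℤ) (Polynomial.derivative p)) hH
    simp only [Polynomial.derivative_sub, Polynomial.eval_sub] at hd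
    rw [hd, Polynomial.derivative_C_mul, Polynomial.eval_mul, Polynomial.eval_C]
  -- Step c : value of the derivative of the left side
  have hDn : D n = D M * (1 - X^(M+1)) := prod_range_succ _ M
  have hc : Polynomial.eval (1 : Polynomial ℤ) (Polynomial.derivative
        (Polynomial.C (D M) * ((∏ k ∈ range n, (Polynomial.C ((X : Polynomial ℤ) ^ (n - k)) - Polynomial.X)) *
          (∏ i ∈ range n, (1 - Polynomial.X * Polynomial.C ((X : Polynomial ℤ) ^ i))))))
      = (-1)^M * (D M ^ 3 * (1 - X^(M+1))) := by
    have hP2 : (∏ i ∈ range n, ((1:Polynomial (Polynomial ℤ)) - Polynomial.X * Polynomial.C ((X:Polynomial ℤ) ^ i)))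
        = (1 - Polynomial.X) * ∏ i ∈ range M, (1 - Polynomial.X * Polynomial.C ((X:Polynomial ℤ) ^ (i+1))) := by
      rw [hn, prod_range_succ' (fun i => (1:Polynomial (Polynomial ℤ)) - Polynomial.X * Polynomial.C ((X:Polynomial ℤ)^i)) M]
      rw [pow_zero, map_one, mul_one, mul_comm]
    have hfact : Polynomial.C (D M) * ((∏ k ∈ range n, (Polynomial.C ((X : Polynomial ℤ) ^ (n - k)) - Polynomial.X)) *
          (∏ i ∈ range n, (1 - Polynomial.X * Polynomial.C ((X : Polynomial ℤ) ^ i))))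
        = (1 - Polynomial.X) * (Polynomial.C (D M) *
            (∏ k ∈ range n, (Polynomial.C ((X : Polynomial ℤ) ^ (n - k)) - Polynomial.X)) *
            ∏ i ∈ range M, (1 - Polynomial.X * Polynomial.C ((X:Polynomial ℤ) ^ (i+1)))) := by
      rw [hP2]; ring
    rw [hfact]
    rw [Polynomial.derivative_mul]
    simp only [Polynomial.derivative_sub, Polynomial.derivative_one, Polynomial.derivative_X,
      Polynomial.eval_add, Polynomial.eval_mul, Polynomial.eval_sub, Polynomial.eval_one,
      Polynomial.eval_X, zero_sub, sub_self, zero_mul, mul_zero, add_zero, Polynomial.eval_neg,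
      Polynomial.eval_C, Polynomial.eval_prod, neg_mul, neg_one_mul, one_mul]
    have hevP1 : (∏ k ∈ range n, ((X:Polynomial ℤ)^(n-k) - 1)) = (-1)^n * D n := by
      have h1 : ∀ k ∈ range n, ((X:Polynomial ℤ)^(n-k) - 1)
          = (-1) * (1 - X^(n-k)) := fun k _ => by ring
      rw [prod_congr rfl h1, prod_mul_distrib, prod_const, card_range]
      congr 1
      rw [D, ← prod_range_reflect (fun j => 1 - (X:Polynomial ℤ)^(j+1)) n]
      exact prod_congr rfl fun j hj => by rw [mem_range] at hj; congr 2; omega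
    rw [hevP1, hDn, show (∏ x ∈ range M, ((1:Polynomial ℤ) - X ^ (x + 1))) = D M from rfl]
    have hsign : ((-1:Polynomial ℤ))^n = (-1)^M * (-1) := by rw [hn, pow_succ]
    rw [hsign]
    ring
  -- Step d : value of the derivative of the sum side
  have hdS : Polynomial.eval (1 : Polynomial ℤ) (Polynomial.derivative
        (∑ j ∈ range (2*n+1), (-1)^j * Polynomial.C ((X : Polynomial ℤ) ^ e n j) * Polynomial.X ^ j))
      = ∑ j ∈ range (2*n+1), (-1)^j * (X : Polynomial ℤ)^(e n j) * (j : Polynomial ℤ) := by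
    rw [Polynomial.derivative_sum, Polynomial.eval_finset_sum]
    apply sum_congr rfl
    intro j hj
    rw [show ((-1 : Polynomial (Polynomial ℤ)))^j * Polynomial.C ((X : Polynomial ℤ) ^ e n j)
          * Polynomial.X ^ j
        = Polynomial.C ((-1)^j * (X : Polynomial ℤ) ^ e n j) * Polynomial.X ^ j from by
          simp,
      Polynomial.derivative_C_mul, Polynomial.derivative_X_pow, Polynomial.eval_mul,
      Polynomial.eval_C, Polynomial.eval_mul, Polynomial.eval_C, Polynomial.eval_pow,
      Polynomial.eval_X, one_pow, mul_one]
  -- Step d' : pairing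
  have hpair : (∑ j ∈ range (2*n+1), ((-1 : Polynomial ℤ))^j * (X : Polynomial ℤ)^(e n j)
        * (j : Polynomial ℤ))
      = (-1)^M * ∑ t ∈ range (M+1), Polynomial.C ((-1)^t * (2*t+1) : ℤ) * X ^ tri (t+1) := by
    rw [sum_range_succ' (fun j => ((-1 : Polynomial ℤ))^j * (X : Polynomial ℤ)^(e n j)
        * (j : Polynomial ℤ)) (2*n)]
    simp only [Nat.cast_zero, mul_zero, add_zero]
    rw [two_mul, sum_range_add]
    have hrefl : (∑ x ∈ range n, ((-1 : Polynomial ℤ))^(x+1) * (X : Polynomial ℤ)^(e n (x+1))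
          * ((x+1 : ℕ) : Polynomial ℤ))
        = ∑ x ∈ range n, ((-1 : Polynomial ℤ))^(n-x) * (X : Polynomial ℤ)^(e n (n-x))
          * ((n-x : ℕ) : Polynomial ℤ) := by
      rw [← sum_range_reflect (fun x => ((-1 : Polynomial ℤ))^(x+1) * (X : Polynomial ℤ)^(e n (x+1))
        * ((x+1 : ℕ) : Polynomial ℤ)) n]
      exact sum_congr rfl fun x hx => by
        rw [mem_range] at hx
        rw [show n - 1 - x + 1 = n - x from by omega]
    rw [hrefl, ← sum_add_distrib, mul_sum]
    apply sum_congr rfl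
    intro j hj
    rw [mem_range] at hj
    have he1 : e n (n+j+1) = tri (j+1) := e_n_add n (j+1)
    have he2 : e n (n - j) = tri (j+1) := e_n_sub n j (by omega)
    rw [he1, he2, hn]
    have key := congrArg (fun z : ℤ => Polynomial.C z * (X : Polynomial ℤ)^(tri (j+1)))
      (pair_coeff M j (by omega))
    push_cast [map_add, map_mul, map_pow, map_neg, map_one, Polynomial.C_eq_intCast, Polynomial.C_eq_natCast] at key ⊢
    linear_combination key
  -- Step e : conclude
  rw [hc, hdS, hpair] at hb
  have hsq : ((-1:Polynomial ℤ))^M * (-1)^M = 1 := by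
    rw [← mul_pow]; norm_num
  have hd1 : (X:Polynomial ℤ)^(M+1) ∣ ((-1:Polynomial ℤ))^M * (D M ^ 3 * (1 - X^(M+1)))
      - (-1)^M * ∑ t ∈ range (M+1), Polynomial.C ((-1)^t * (2*t+1) : ℤ) * X ^ tri (t+1) :=
    ⟨_, hb⟩
  have hd2 : (X:Polynomial ℤ)^(M+1) ∣ D M ^ 3 * (1 - X^(M+1))
      - ∑ t ∈ range (M+1), Polynomial.C ((-1)^t * (2*t+1) : ℤ) * X ^ tri (t+1) := by
    have h2 : D M ^ 3 * (1 - X^(M+1))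
        - ∑ t ∈ range (M+1), Polynomial.C ((-1)^t * (2*t+1) : ℤ) * X ^ tri (t+1)
        = (-1:Polynomial ℤ)^M * (((-1:Polynomial ℤ))^M * (D M ^ 3 * (1 - X^(M+1)))
          - (-1)^M * ∑ t ∈ range (M+1), Polynomial.C ((-1)^t * (2*t+1) : ℤ) * X ^ tri (t+1)) := by
      linear_combination (-(D M ^ 3 * (1 - (X:Polynomial ℤ)^(M+1))
        - ∑ t ∈ range (M+1), Polynomial.C ((-1)^t * (2*t+1) : ℤ) * X ^ tri (t+1))) * hsq
    rw [h2]
    exact Dvd.dvd.mul_left hd1 _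
  have h3 : D M ^ 3 - ∑ t ∈ range (M+1), Polynomial.C ((-1)^t * (2*t+1) : ℤ) * X ^ tri (t+1)
      = (D M ^ 3 * (1 - X^(M+1))
        - ∑ t ∈ range (M+1), Polynomial.C ((-1)^t * (2*t+1) : ℤ) * X ^ tri (t+1))
      + X^(M+1) * D M ^ 3 := by ring
  rw [h3]
  exact dvd_add hd2 (Dvd.intro _ rfl)


/-- the coefficient function of Jacobi's cube identity -/
def jt (g : ℕ) : ℤ := ∑ t ∈ range (g+1), if g = tri (t+1) then (-1)^t * (2*t+1) else 0

lemma coeff_eq_jt (g : ℕ) :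
    PowerSeries.coeff (R := ℤ) g (∏ n ∈ Icc 1 g, (1 - PowerSeries.X ^ n) ^ 3) = jt g := by
  -- rewrite the power series product as a polynomial cast
  have hcast : (∏ n ∈ Icc 1 g, ((1 : PowerSeries ℤ) - PowerSeries.X ^ n) ^ 3)
      = ((D g ^ 3 : Polynomial ℤ) : PowerSeries ℤ) := by
    rw [Polynomial.coe_pow, D]
    rw [show ((∏ i ∈ range g, (1 - (X : Polynomial ℤ) ^ (i+1)) : Polynomial ℤ) : PowerSeries ℤ)
        = ∏ i ∈ range g, ((1 : PowerSeries ℤ) - PowerSeries.X ^ (i+1)) from by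
      rw [← Polynomial.coeToPowerSeries.ringHom_apply, map_prod]
      exact prod_congr rfl fun i _ => by
        simp [Polynomial.coeToPowerSeries.ringHom_apply]]
    rw [← prod_pow]
    rw [show Icc 1 g = Ico 1 (g+1) from rfl]
    rw [prod_Ico_eq_prod_range]
    exact prod_congr rfl fun i _ => by rw [Nat.add_comm 1 i]
  rw [hcast]
  -- use jacobi mod X^(g+1)
  obtain ⟨h, hh⟩ := jacobi g
  have hpoly : D g ^ 3 = (∑ t ∈ range (g+1), Polynomial.C ((-1)^t * (2*t+1) : ℤ) * X ^ tri (t+1))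
      + X^(g+1) * h := by linear_combination hh
  have hsum : ((D g ^ 3 : Polynomial ℤ) : PowerSeries ℤ)
      = ((∑ t ∈ range (g+1), Polynomial.C ((-1)^t * (2*t+1) : ℤ) * X ^ tri (t+1)
          : Polynomial ℤ) : PowerSeries ℤ)
        + (PowerSeries.X) ^ (g+1) * ((h : Polynomial ℤ) : PowerSeries ℤ) := by
    rw [hpoly]
    push_cast
    ring
  rw [hsum, map_add]
  have hX0 : (PowerSeries.coeff (R := ℤ) g) ((PowerSeries.X : PowerSeries ℤ) ^ (g+1)
      * ((h : Polynomial ℤ) : PowerSeries ℤ)) = 0 := by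
    have hdvd : ((PowerSeries.X : PowerSeries ℤ)) ^ (g+1) ∣
        (PowerSeries.X) ^ (g+1) * ((h : Polynomial ℤ) : PowerSeries ℤ) := Dvd.intro _ rfl
    exact PowerSeries.X_pow_dvd_iff.1 hdvd g (by omega)
  rw [hX0, add_zero, Polynomial.coeff_coe]
  -- compute the coefficient of the sum
  rw [Polynomial.finset_sum_coeff]
  unfold jt
  apply sum_congr rfl
  intro t ht
  rw [Polynomial.coeff_C_mul, Polynomial.coeff_X_pow]
  split <;> simp_all


lemma jt_zero : jt 0 = 1 := by
  unfold jt
  rw [range_one, sum_singleton, if_pos (by rfl)]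
  norm_num

lemma tri_prod_mod1 {t : ℕ} (h : t % 3 = 1) : ((t+1)*t) % 3 = 2 := by
  obtain ⟨a, rfl⟩ : ∃ a, t = 3*a+1 := ⟨t/3, by omega⟩
  obtain ⟨x, hx⟩ : ∃ x, (3*a+1+1)*(3*a+1) = 3*x+2 := ⟨3*a*a+3*a, by ring⟩
  omega

lemma tri_prod_mod0 {t : ℕ} (h : t % 3 ≠ 1) : ((t+1)*t) % 3 = 0 := by
  obtain ⟨a, r, hr, rfl⟩ : ∃ a r, r < 3 ∧ t = 3*a+r := ⟨t/3, t%3, by omega, by omega⟩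
  interval_cases r
  · obtain ⟨x, hx⟩ : ∃ x, (3*a+0+1)*(3*a+0) = 3*x := ⟨a*(3*a+1), by ring⟩
    omega
  · omega
  · obtain ⟨x, hx⟩ : ∃ x, (3*a+2+1)*(3*a+2) = 3*x := ⟨(a+1)*(3*a+2), by ring⟩
    omega

lemma jt_two {g : ℕ} (hg : g % 3 = 2) : jt g = 0 := by
  unfold jt
  apply sum_eq_zero
  intro t ht
  rw [if_neg]
  intro h
  have h2 : 2*g = (t+1)*t := by rw [h]; exact two_tri_succ t
  have key : (2*g) % 3 = ((t+1)*t) % 3 := by rw [h2]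
  rcases Decidable.eq_or_ne (t % 3) 1 with h1 | h1
  · have := tri_prod_mod1 h1; omega
  · have := tri_prod_mod0 h1; omega

lemma jt_one {g : ℕ} (hg : g % 3 = 1) : (3:ℤ) ∣ jt g := by
  unfold jt
  apply dvd_sum
  intro t ht
  split
  · next h =>
    have h2 : 2*g = (t+1)*t := by rw [h]; exact two_tri_succ t
    have key : (2*g) % 3 = ((t+1)*t) % 3 := by rw [h2]
    have ht3 : t % 3 = 1 := by
      by_contra hc
      have := tri_prod_mod0 hc; omega
    have hdvd : (3:ℤ) ∣ (2*t+1 : ℤ) := by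
      obtain ⟨a, rfl⟩ : ∃ a, t = 3*a+1 := ⟨t/3, by omega⟩
      exact ⟨2*a+1, by push_cast; ring⟩
    exact Dvd.dvd.mul_left hdvd _
  · exact dvd_zero 3

end
end Stmt15aux

open PowerSeries Finset

theorem stmt15 :
    ∃ A B : ℕ → ℤ, A 0 = 1 ∧
      ∀ g : ℕ,
        PowerSeries.coeff (R := ℤ) g (∏ n ∈ Icc 1 g, (1 - PowerSeries.X ^ n) ^ 3) =
          (if g % 3 = 0 then A (g / 3) else 0) +
            3 * (if g % 3 = 1 then B (g / 3) else 0) := by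
  refine ⟨fun k => Stmt15aux.jt (3*k), fun k => Stmt15aux.jt (3*k+1) / 3, Stmt15aux.jt_zero, ?_⟩
  intro g
  rw [Stmt15aux.coeff_eq_jt g]
  have h3 : g % 3 = 0 ∨ g % 3 = 1 ∨ g % 3 = 2 := by omega
  rcases h3 with h | h | h
  · rw [if_pos h, if_neg (by omega), mul_zero, add_zero]
    show _ = Stmt15aux.jt (3*(g/3))
    rw [show 3*(g/3) = g from by omega]
  · rw [if_neg (by omega), if_pos h, zero_add]
    show _ = 3 * (Stmt15aux.jt (3*(g/3)+1) / 3)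
    rw [show 3*(g/3)+1 = g from by omega]
    exact (Int.mul_ediv_cancel' (Stmt15aux.jt_one h)).symm
  · rw [if_neg (by omega), if_neg (by omega), Stmt15aux.jt_two h]
    ring
end

section
/- If $e \equiv 0 \pmod{16}$, then the coefficients $w_g$ of $\prod_{r \ge 1}(1+q^r)^{-e}\prod_{s \ge 1}(1-q^{2s})^{-(24-e)/2}$ satisfy $w_g \equiv 0 \pmod{16}$ for every odd $g > 1$. -/
open PowerSeries Finset

/-! ### Auxiliary machinery -/

/-- A power series is "even" if all its odd coefficients vanish. -/
def IsEvenPS {R : Type*} [CommRing R] (f : PowerSeries R) : Prop :=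
  ∀ n : ℕ, Odd n → PowerSeries.coeff (R := R) n f = 0

namespace IsEvenPS

variable {R : Type*} [CommRing R]

lemma one : IsEvenPS (1 : PowerSeries R) := by
  intro n hn
  rw [PowerSeries.coeff_one, if_neg hn.pos.ne']

lemma mul {f h : PowerSeries R} (hf : IsEvenPS f) (hh : IsEvenPS h) :
    IsEvenPS (f * h) := by
  intro n hn
  rw [PowerSeries.coeff_mul]
  apply Finset.sum_eq_zero
  intro p hp
  rw [Finset.HasAntidiagonal.mem_antidiagonal] at hp
  rcases Nat.even_or_odd p.1 with h1 | h1
  · have h2 : Odd p.2 := by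
      rw [Nat.odd_iff] at hn ⊢; rw [Nat.even_iff] at h1; omega
    rw [hh _ h2, mul_zero]
  · rw [hf _ h1, zero_mul]

lemma pow {f : PowerSeries R} (hf : IsEvenPS f) (k : ℕ) : IsEvenPS (f ^ k) := by
  induction k with
  | zero => simpa using IsEvenPS.one
  | succ k ih => rw [pow_succ]; exact ih.mul hf

lemma prod {ι : Type*} (s : Finset ι) (f : ι → PowerSeries R)
    (h : ∀ i ∈ s, IsEvenPS (f i)) : IsEvenPS (∏ i ∈ s, f i) := by
  classical
  induction s using Finset.induction_on with
  | empty => simpa using IsEvenPS.one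
  | insert _ _ hx ih =>
      rw [Finset.prod_insert hx]
      exact (h _ (Finset.mem_insert_self _ _)).mul
        (ih fun i hi => h i (Finset.mem_insert_of_mem hi))

lemma of_mul_eq_one {f h : PowerSeries R} (hf : IsEvenPS f)
    (hf1 : PowerSeries.constantCoeff (R := R) f = 1) (hfh : f * h = 1) : IsEvenPS h := by
  intro n
  induction n using Nat.strong_induction_on with
  | _ n ih =>
    intro hn
    have h0 : PowerSeries.coeff (R := R) n (f * h) = 0 := by
      rw [hfh, PowerSeries.coeff_one, if_neg hn.pos.ne']
    rw [PowerSeries.coeff_mul, Finset.sum_eq_single (0, n)] at h0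
    · rwa [PowerSeries.coeff_zero_eq_constantCoeff, hf1, one_mul] at h0
    · intro p hp hne
      rw [Finset.HasAntidiagonal.mem_antidiagonal] at hp
      rcases Nat.even_or_odd p.1 with h1 | h1
      · have hp1 : p.1 ≠ 0 := by
          rintro h01
          apply hne
          rw [Prod.ext_iff]
          constructor
          · exact h01
          · omega
        have h2 : Odd p.2 := by
          rw [Nat.odd_iff] at hn ⊢; rw [Nat.even_iff] at h1; omega
        have hlt : p.2 < n := by omega
        rw [ih _ hlt h2, mul_zero]
      · rw [hf _ h1, zero_mul]
    · intro hmem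
      exact absurd (Finset.HasAntidiagonal.mem_antidiagonal.mpr (by simp)) hmem

end IsEvenPS

lemma choose16 : ∀ k, k < 17 → Odd k → ((Nat.choose 16 k : ℕ) : ZMod 16) = 0 := by decide

/-- `(1+X^r)^16` has only even coefficients mod 16. -/
lemma even_pow16 (r : ℕ) : IsEvenPS ((1 + PowerSeries.X ^ r : PowerSeries (ZMod 16)) ^ 16) := by
  intro n hn
  rw [add_comm, add_pow, map_sum]
  apply Finset.sum_eq_zero
  intro k hk
  rw [Finset.mem_range] at hk
  rw [one_pow, mul_one, ← pow_mul,
    show ((Nat.choose 16 k : ℕ) : PowerSeries (ZMod 16))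
      = PowerSeries.C (R := ZMod 16) ((Nat.choose 16 k : ℕ) : ZMod 16) from
        (map_natCast (PowerSeries.C (R := ZMod 16)) _).symm,
    PowerSeries.coeff_mul_C, PowerSeries.coeff_X_pow]
  by_cases hkn : n = r * k
  · have hkodd : Odd k := (Nat.odd_mul.mp (hkn ▸ hn)).2
    rw [choose16 k hk hkodd, mul_zero]
  · rw [if_neg hkn, zero_mul]

lemma even_base2 (s : ℕ) :
    IsEvenPS (1 - PowerSeries.X ^ (2 * s) : PowerSeries (ZMod 16)) := by
  intro n hn
  have hne : n ≠ 2 * s := by rw [Nat.odd_iff] at hn; omega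
  rw [map_sub, PowerSeries.coeff_one, if_neg hn.pos.ne', PowerSeries.coeff_X_pow,
    if_neg hne, sub_zero]

/-- Integer power of an integer power series with constant coefficient 1. -/
noncomputable def zpz (f : PowerSeries ℤ) (n : ℤ) : PowerSeries ℤ :=
  if 0 ≤ n then f ^ n.toNat else (PowerSeries.invOfUnit f 1) ^ (-n).toNat

lemma map_zpz (f : PowerSeries ℤ) (hf : PowerSeries.constantCoeff (R := ℤ) f = 1) (n : ℤ) :
    PowerSeries.map (Int.castRingHom ℚ) (zpz f n) =
      zp (PowerSeries.map (Int.castRingHom ℚ) f) n := by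
  by_cases h : 0 ≤ n
  · simp [zpz, zp, h]
  · rw [zpz, zp, if_neg h, if_neg h, map_pow]
    congr 1
    symm
    rw [PowerSeries.inv_eq_iff_mul_eq_one]
    · rw [← map_mul, PowerSeries.invOfUnit_mul f 1 (by simp [hf]), map_one]
    · rw [← PowerSeries.coeff_zero_eq_constantCoeff_apply, PowerSeries.coeff_map,
        PowerSeries.coeff_zero_eq_constantCoeff_apply, hf]
      simp

lemma map16_base1 (r : ℕ) :
    PowerSeries.map (Int.castRingHom (ZMod 16)) (1 + PowerSeries.X ^ r)
      = 1 + PowerSeries.X ^ r := by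
  simp

lemma map16_base2 (s : ℕ) :
    PowerSeries.map (Int.castRingHom (ZMod 16)) (1 - PowerSeries.X ^ (2 * s))
      = 1 - PowerSeries.X ^ (2 * s) := by
  simp

lemma evenA (r : ℕ) (hr : r ≠ 0) (m : ℤ) (hm : (16 : ℤ) ∣ m) :
    IsEvenPS (PowerSeries.map (Int.castRingHom (ZMod 16))
      (zpz (1 + PowerSeries.X ^ r) m)) := by
  obtain ⟨t, rfl⟩ := hm
  by_cases h : 0 ≤ (16 * t : ℤ)
  · rw [zpz, if_pos h, map_pow, map16_base1,
      show ((16 * t : ℤ)).toNat = 16 * t.toNat by omega, pow_mul]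
    exact (even_pow16 r).pow _
  · rw [zpz, if_neg h, map_pow]
    set j := PowerSeries.map (Int.castRingHom (ZMod 16))
      (PowerSeries.invOfUnit (1 + PowerSeries.X ^ r) 1) with hj
    have hmul : (1 + PowerSeries.X ^ r : PowerSeries (ZMod 16)) * j = 1 := by
      rw [hj, ← map16_base1 r, ← map_mul,
        PowerSeries.mul_invOfUnit _ 1 (by simp [hr]), map_one]
    have h16 : ((1 + PowerSeries.X ^ r : PowerSeries (ZMod 16)) ^ 16) * j ^ 16 = 1 := by
      rw [← mul_pow, hmul, one_pow]
    have hEj : IsEvenPS (j ^ 16) :=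
      (even_pow16 r).of_mul_eq_one (by simp [hr]) h16
    rw [show ((-(16 * t) : ℤ)).toNat = 16 * (-t).toNat by omega, pow_mul]
    exact hEj.pow _

lemma evenB (s : ℕ) (hs : s ≠ 0) (m : ℤ) :
    IsEvenPS (PowerSeries.map (Int.castRingHom (ZMod 16))
      (zpz (1 - PowerSeries.X ^ (2 * s)) m)) := by
  by_cases h : 0 ≤ m
  · rw [zpz, if_pos h, map_pow, map16_base2]
    exact (even_base2 s).pow _
  · rw [zpz, if_neg h, map_pow]
    set j := PowerSeries.map (Int.castRingHom (ZMod 16))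
      (PowerSeries.invOfUnit (1 - PowerSeries.X ^ (2 * s)) 1) with hj
    have hmul : (1 - PowerSeries.X ^ (2 * s) : PowerSeries (ZMod 16)) * j = 1 := by
      rw [hj, ← map16_base2 s, ← map_mul,
        PowerSeries.mul_invOfUnit _ 1 (by simp [hs]), map_one]
    have hEj : IsEvenPS j :=
      (even_base2 s).of_mul_eq_one (by simp [hs]) hmul
    exact hEj.pow _

theorem stmt17 (e : ℤ) (he : (16 : ℤ) ∣ e) (g : ℕ) (hodd : Odd g) (hg : 1 < g) :
    ∃ k : ℤ, W e g = 16 * k := by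
  set Gz : PowerSeries ℤ :=
    (∏ r ∈ Icc 1 g, zpz (1 + PowerSeries.X ^ r) (-e)) *
    (∏ s ∈ Icc 1 g, zpz (1 - PowerSeries.X ^ (2 * s)) (-((24 - e) / 2))) with hGz
  have hW : W e g = ((PowerSeries.coeff (R := ℤ) g Gz : ℤ) : ℚ) := by
    have hmap : PowerSeries.map (Int.castRingHom ℚ) Gz =
        (∏ r ∈ Icc 1 g, zp (1 + PowerSeries.X ^ r) (-e)) *
        (∏ s ∈ Icc 1 g, zp (1 - PowerSeries.X ^ (2 * s)) (-((24 - e) / 2))) := by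
      rw [hGz, map_mul, map_prod, map_prod]
      congr 1
      · refine Finset.prod_congr rfl fun r hr => ?_
        have hr1 : r ≠ 0 := by
          rw [Finset.mem_Icc] at hr; omega
        rw [map_zpz _ (by simp [hr1])]
        congr 1
        simp
      · refine Finset.prod_congr rfl fun s hs => ?_
        have hs1 : s ≠ 0 := by
          rw [Finset.mem_Icc] at hs; omega
        rw [map_zpz _ (by simp [hs1])]
        congr 1
        simp
    rw [W, ← hmap, PowerSeries.coeff_map]
    simp
  have hE : IsEvenPS (PowerSeries.map (Int.castRingHom (ZMod 16)) Gz) := by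
    rw [hGz, map_mul, map_prod, map_prod]
    apply IsEvenPS.mul
    · apply IsEvenPS.prod
      intro r hr
      have hr1 : r ≠ 0 := by rw [Finset.mem_Icc] at hr; omega
      exact evenA r hr1 (-e) (dvd_neg.mpr he)
    · apply IsEvenPS.prod
      intro s hs
      have hs1 : s ≠ 0 := by rw [Finset.mem_Icc] at hs; omega
      exact evenB s hs1 _
  have hdvd : (16 : ℤ) ∣ PowerSeries.coeff (R := ℤ) g Gz := by
    have h0 := hE g hodd
    rw [PowerSeries.coeff_map] at h0
    exact_mod_cast (ZMod.intCast_zmod_eq_zero_iff_dvd _ 16).mp (by exact_mod_cast h0)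
  obtain ⟨k, hk⟩ := hdvd
  refine ⟨k, ?_⟩
  rw [hW, hk]
  push_cast
  ring
end

section
/- If two sequences of positive reals satisfy $\log a_n \sim (an)^\alpha$ and $\log b_n \sim (bn)^\alpha$ for constants $a, b > 0$ and $0 < \alpha < 1$, then the coefficients $p_n = \sum_{k=0}^n a_k b_{n-k}$ of the product series satisfy $\log p_n \sim (cn)^\alpha$ where $c = (a^{\alpha/(1-\alpha)} + b^{\alpha/(1-\alpha)})^{(1-\alpha)/\alpha}$. -/
set_option maxHeartbeats 1000000
open Filter Real

lemma young2 {α u x l : ℝ} (hα0 : 0 < α) (hα1 : α < 1) (hu : 0 ≤ u) (hx : 0 ≤ x) (hl : 0 < l) :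
    u ^ α * x ^ α ≤ α * (l * x) + (1 - α) * (u ^ (α/(1-α)) * l ^ (-(α/(1-α)))) := by
  have h1α : (0:ℝ) < 1 - α := by linarith
  have hpq : (1/α).HolderConjugate (1/(1-α)) := by
    constructor
    · rw [one_div, one_div, inv_inv, inv_inv, inv_one]; ring
    · positivity
    · positivity
  have h := Real.young_inequality_of_nonneg
    (mul_nonneg (Real.rpow_nonneg hx α) (Real.rpow_nonneg hl.le α))
    (mul_nonneg (Real.rpow_nonneg hu α) (Real.rpow_nonneg hl.le (-α))) hpq
  have e1 : x ^ α * l ^ α * (u ^ α * l ^ (-α)) = u ^ α * x ^ α := by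
    have hll : l ^ α * l ^ (-α) = 1 := by
      rw [← Real.rpow_add hl]; simp
    calc x ^ α * l ^ α * (u ^ α * l ^ (-α)) = (u ^ α * x ^ α) * (l ^ α * l ^ (-α)) := by ring
    _ = u ^ α * x ^ α := by rw [hll, mul_one]
  have e2 : (x ^ α * l ^ α) ^ (1/α) / (1/α) = α * (l * x) := by
    rw [← Real.mul_rpow hx hl.le, ← Real.rpow_mul (mul_nonneg hx hl.le),
      mul_one_div_cancel hα0.ne', Real.rpow_one]
    field_simp
  have e3 : (u ^ α * l ^ (-α)) ^ (1/(1-α)) / (1/(1-α))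
      = (1-α) * (u ^ (α/(1-α)) * l ^ (-(α/(1-α)))) := by
    rw [Real.mul_rpow (Real.rpow_nonneg hu α) (Real.rpow_nonneg hl.le (-α)),
      ← Real.rpow_mul hu, ← Real.rpow_mul hl.le, neg_mul, mul_one_div]
    field_simp
  rw [e1, e2, e3] at h
  exact h

lemma key {α a b : ℝ} (hα0 : 0 < α) (hα1 : α < 1) (ha : 0 < a) (hb : 0 < b)
    {x y : ℝ} (hx : 0 ≤ x) (hy : 0 ≤ y) :
    (a*x)^α + (b*y)^α ≤ ((a ^ (α/(1-α)) + b ^ (α/(1-α))) ^ ((1-α)/α) * (x+y))^α := by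
  have h1α : (0:ℝ) < 1 - α := by linarith
  set β := α/(1-α) with hβdef
  have hβ : 0 < β := div_pos hα0 h1α
  set S := a ^ β + b ^ β with hSdef
  have hS : 0 < S := by positivity
  set c := S ^ ((1-α)/α) with hcdef
  have hc : 0 < c := by positivity
  have hcα : c ^ α = S ^ (1-α) := by
    rw [hcdef, ← Real.rpow_mul hS.le, div_mul_cancel₀ _ hα0.ne']
  rcases eq_or_lt_of_le (by positivity : (0:ℝ) ≤ x + y) with h0 | hxy
  · have hx0 : x = 0 := by linarith [hy, hx]
    have hy0 : y = 0 := by linarith [hy, hx]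
    simp [hx0, hy0, Real.zero_rpow hα0.ne']
  · set l := c ^ α * (x+y) ^ (α-1) with hldef
    have hl : 0 < l := by positivity
    have h1 := young2 hα0 hα1 ha.le hx hl
    have h2 := young2 hα0 hα1 hb.le hy hl
    have hax : (a*x)^α = a^α * x^α := Real.mul_rpow ha.le hx
    have hby : (b*y)^α = b^α * y^α := Real.mul_rpow hb.le hy
    have hlβ : l ^ (-β) = S^(-α) * (x+y)^α := by
      rw [hldef, Real.mul_rpow (by positivity) (by positivity),
        ← Real.rpow_mul hc.le, ← Real.rpow_mul hxy.le, hcdef, ← Real.rpow_mul hS.le]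
      congr 1
      · congr 1
        rw [hβdef]; field_simp
      · congr 1
        rw [hβdef]; field_simp; ring
    have hpw : (x+y)^(α-1)*(x+y) = (x+y)^α := by
      rw [← Real.rpow_add_one hxy.ne']; norm_num
    have hSS : S * S^(-α) = S^(1-α) := by
      rw [show (1:ℝ)-α = 1 + (-α) by ring, Real.rpow_add hS, Real.rpow_one]
    calc (a*x)^α + (b*y)^α = a^α*x^α + b^α*y^α := by rw [hax, hby]
      _ ≤ (α*(l*x) + (1-α)*(a^β*l^(-β))) + (α*(l*y) + (1-α)*(b^β*l^(-β))) := add_le_add h1 h2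
      _ = α*(l*(x+y)) + (1-α)*(S*l^(-β)) := by rw [hSdef]; ring
      _ = (c*(x+y))^α := by
          rw [hlβ, hldef, hcα, Real.mul_rpow hc.le hxy.le, hcα]
          linear_combination (α*S^(1-α))*hpw + ((1-α)*(x+y)^α)*hSS

-- (x * (x^β / S))^α = x^β / S^α
lemma part {α x S : ℝ} (hα0 : 0 < α) (hα1 : α < 1) (hx : 0 < x) (hS : 0 < S) :
    (x * (x ^ (α/(1-α)) / S)) ^ α = x ^ (α/(1-α)) / S ^ α := by
  have h1α : (0:ℝ) < 1 - α := by linarith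
  have e : x * (x ^ (α/(1-α)) / S) = x ^ (1 + α/(1-α)) / S := by
    rw [Real.rpow_add hx, Real.rpow_one]; ring
  rw [e, Real.div_rpow (by positivity) hS.le, ← Real.rpow_mul hx.le]
  congr 1
  field_simp
  ring

theorem stmt18 (α a b : ℝ) (hα0 : 0 < α) (hα1 : α < 1) (ha : 0 < a) (hb : 0 < b)
    (A B : ℕ → ℝ) (hA : ∀ n, 0 < A n) (hB : ∀ n, 0 < B n)
    (hAs : Tendsto (fun n : ℕ => Real.log (A n) / (a * n) ^ α) atTop (nhds 1))
    (hBs : Tendsto (fun n : ℕ => Real.log (B n) / (b * n) ^ α) atTop (nhds 1)) :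
    Tendsto
      (fun n : ℕ =>
        Real.log (∑ k ∈ Finset.range (n + 1), A k * B (n - k)) /
          (((a ^ (α / (1 - α)) + b ^ (α / (1 - α))) ^ ((1 - α) / α)) * n) ^ α)
      atTop (nhds 1) := by
  have h1α : (0:ℝ) < 1 - α := by linarith
  set β := α / (1 - α) with hβdef
  have hβ : 0 < β := div_pos hα0 h1α
  set S := a ^ β + b ^ β with hSdef
  have hS : 0 < S := by positivity
  set c := S ^ ((1 - α) / α) with hcdef
  have hc : 0 < c := by positivity
  have hcα : c ^ α = S ^ (1 - α) := by
    rw [hcdef, ← Real.rpow_mul hS.le, div_mul_cancel₀ _ hα0.ne']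
  have hkey : ∀ x y : ℝ, 0 ≤ x → 0 ≤ y → (a*x)^α + (b*y)^α ≤ (c*(x+y))^α := by
    intro x y hx hy
    rw [hcdef, hSdef, hβdef]
    exact key hα0 hα1 ha hb hx hy
  set t := a ^ β / S with htdef
  set s := b ^ β / S with hsdef
  have ht0 : 0 < t := by positivity
  have hs0 : 0 < s := by positivity
  have hts : t + s = 1 := by rw [htdef, hsdef, hSdef]; field_simp
  have ht1 : t < 1 := by linarith
  have hident : (a*t/c)^α + (b*s/c)^α = 1 := by
    have e1 : (a*t)^α = a ^ β / S ^ α := by rw [htdef, hβdef]; exact part hα0 hα1 ha hS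
    have e2 : (b*s)^α = b ^ β / S ^ α := by rw [hsdef, hβdef]; exact part hα0 hα1 hb hS
    have hSα : (0:ℝ) < S ^ α := by positivity
    rw [Real.div_rpow (by positivity) hc.le, Real.div_rpow (by positivity) hc.le, e1, e2,
      hcα, ← add_div, ← add_div, div_div, ← Real.rpow_add hS,
      show α + (1 - α) = (1:ℝ) by ring, Real.rpow_one, ← hSdef, div_self hS.ne']
  set P : ℕ → ℝ := fun n => ∑ k ∈ Finset.range (n + 1), A k * B (n - k) with hPdef
  have hP : ∀ n, 0 < P n := fun n =>
    Finset.sum_pos (fun k _ => mul_pos (hA k) (hB _)) ⟨0, by simp⟩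
  set k : ℕ → ℕ := fun n => ⌊t * n⌋₊ with hkdef
  have hk_le : ∀ n, k n ≤ n := by
    intro n
    have : t * n ≤ (n:ℝ) := by nlinarith [Nat.cast_nonneg (α := ℝ) n]
    calc k n ≤ ⌊(n:ℝ)⌋₊ := Nat.floor_le_floor this
    _ = n := Nat.floor_natCast n
  have hk_cast : ∀ n : ℕ, ((n - k n : ℕ) : ℝ) = (n:ℝ) - (k n : ℝ) := fun n =>
    Nat.cast_sub (hk_le n)
  have hk_ub : ∀ n : ℕ, (k n : ℝ) ≤ t * n := fun n => Nat.floor_le (by positivity)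
  have hk_lb : ∀ n : ℕ, t * n - 1 < (k n : ℝ) := fun n => Nat.sub_one_lt_floor _
  -- (1) k n / n → t
  have hkt : Tendsto (fun n : ℕ => (k n : ℝ) / n) atTop (nhds t) := by
    have hg : Tendsto (fun n : ℕ => t - 1 / (n:ℝ)) atTop (nhds t) := by
      simpa using (tendsto_const_nhds : Tendsto (fun _ : ℕ => t) atTop (nhds t)).sub tendsto_one_div_atTop_nhds_zero_nat
    apply tendsto_of_tendsto_of_tendsto_of_le_of_le' hg tendsto_const_nhds
    · filter_upwards [eventually_ge_atTop 1] with n hn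
      have hn0 : (0:ℝ) < n := by exact_mod_cast hn
      rw [sub_le_iff_le_add, ← add_div, le_div_iff₀ hn0]
      nlinarith [hk_lb n]
    · filter_upwards [eventually_ge_atTop 1] with n hn
      have hn0 : (0:ℝ) < n := by exact_mod_cast hn
      rw [div_le_iff₀ hn0]
      nlinarith [hk_ub n]
  -- (2) k n → ∞
  have hk_top : Tendsto k atTop atTop := by
    apply tendsto_nat_floor_atTop.comp
    exact (tendsto_natCast_atTop_atTop).const_mul_atTop ht0
  -- (3) n - k n → ∞
  have hnk_top : Tendsto (fun n => n - k n) atTop atTop := by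
    rw [← tendsto_natCast_atTop_iff (R := ℝ)]
    apply tendsto_atTop_mono' atTop ?_ ((tendsto_natCast_atTop_atTop).const_mul_atTop
      (by linarith : (0:ℝ) < 1 - t))
    filter_upwards with n
    rw [hk_cast n]
    nlinarith [hk_ub n]
  -- (4) (n - k n)/n → s
  have hkt' : Tendsto (fun n : ℕ => ((n - k n : ℕ) : ℝ) / n) atTop (nhds s) := by
    have h1 : Tendsto (fun n : ℕ => 1 - (k n : ℝ) / n) atTop (nhds (1 - t)) :=
      tendsto_const_nhds.sub hkt
    have : (1:ℝ) - t = s := by linarith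
    rw [← this]
    apply h1.congr'
    filter_upwards [eventually_ge_atTop 1] with n hn
    have hn0 : (n:ℝ) ≠ 0 := by
      have : (0:ℝ) < n := by exact_mod_cast hn
      exact this.ne'
    show 1 - (k n:ℝ)/n = ((n - k n : ℕ):ℝ)/n
    rw [hk_cast n, sub_div, div_self hn0]
  -- generic limit for one factor
  have hfac : ∀ (d : ℝ) (hd : 0 < d) (m : ℕ → ℕ) (u : ℝ) (hu : 0 < u)
      (hm_top : Tendsto m atTop atTop)
      (hmt : Tendsto (fun n : ℕ => (m n : ℝ) / n) atTop (nhds u))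
      (C : ℕ → ℝ) (hC : ∀ j, 0 < C j)
      (hCs : Tendsto (fun j : ℕ => Real.log (C j) / (d * j) ^ α) atTop (nhds 1)),
      Tendsto (fun n : ℕ => Real.log (C (m n)) / (c * n) ^ α) atTop (nhds ((d*u/c)^α)) := by
    intro d hd m u hu hm_top hmt C hC hCs
    have h1 : Tendsto (fun n : ℕ => Real.log (C (m n)) / (d * (m n : ℝ)) ^ α) atTop (nhds 1) :=
      hCs.comp hm_top
    have h2 : Tendsto (fun n : ℕ => (d * (m n : ℝ)) ^ α / (c * n) ^ α) atTop
        (nhds ((d*u/c)^α)) := by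
      have hq : Tendsto (fun n : ℕ => (d * (m n : ℝ)) / (c * n)) atTop (nhds (d*u/c)) := by
        have := hmt.const_mul (d/c)
        rw [show d*u/c = d/c*u by ring]
        apply this.congr'
        filter_upwards [eventually_ge_atTop 1] with n hn
        have hn0 : (n:ℝ) ≠ 0 := by
          have : (0:ℝ) < n := by exact_mod_cast hn
          exact this.ne'
        field_simp
      have := hq.rpow_const (Or.inr hα0.le)
      apply this.congr'
      filter_upwards [eventually_ge_atTop 1] with n hn
      have hn0 : (0:ℝ) < n := by exact_mod_cast hn
      exact Real.div_rpow (by positivity) (by positivity) α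
    have h3 := h1.mul h2
    rw [one_mul] at h3
    apply h3.congr'
    filter_upwards [hm_top.eventually_ge_atTop 1, eventually_ge_atTop 1] with n hm1 hn1
    have hmn0 : (0:ℝ) < (m n : ℝ) := by exact_mod_cast hm1
    have hn0 : (0:ℝ) < (n:ℝ) := by exact_mod_cast hn1
    have hd1 : ((d * (m n : ℝ)) ^ α) ≠ 0 := by positivity
    have hd2 : ((c * (n : ℝ)) ^ α) ≠ 0 := by positivity
    field_simp
  have hfA := hfac a ha k t ht0 hk_top hkt A hA hAs
  have hfB := hfac b hb (fun n => n - k n) s hs0 hnk_top hkt' B hB hBs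
  have hLB : Tendsto
      (fun n : ℕ => (Real.log (A (k n)) + Real.log (B (n - k n))) / (c * n) ^ α)
      atTop (nhds 1) := by
    have h := hfA.add hfB
    rw [hident] at h
    apply h.congr
    intro n
    rw [add_div]
  have hlow : ∀ᶠ n : ℕ in atTop,
      (Real.log (A (k n)) + Real.log (B (n - k n))) / (c * n) ^ α ≤
        Real.log (P n) / (c * n) ^ α := by
    filter_upwards [eventually_ge_atTop 1] with n hn
    have hn0 : (0:ℝ) < n := by exact_mod_cast hn
    have hD : (0:ℝ) < (c*(n:ℝ))^α := by positivity
    have hterm : A (k n) * B (n - k n) ≤ P n :=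
      Finset.single_le_sum (f := fun i => A i * B (n - i))
        (fun i _ => (mul_pos (hA i) (hB _)).le)
        (Finset.mem_range.mpr (Nat.lt_succ_of_le (hk_le n)))
    have hlog : Real.log (A (k n)) + Real.log (B (n - k n)) ≤ Real.log (P n) := by
      rw [← Real.log_mul (hA _).ne' (hB _).ne']
      exact Real.log_le_log (mul_pos (hA _) (hB _)) hterm
    exact (div_le_div_iff_of_pos_right hD).mpr hlog
  have hupper : ∀ ε : ℝ, 0 < ε → ∀ᶠ n : ℕ in atTop,
      Real.log (P n) / (c * n) ^ α < 1 + 2*ε := by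
    intro ε hε
    have hbnd : ∀ (d : ℝ), 0 < d → ∀ (C : ℕ → ℝ), (∀ j, 0 < C j) →
        Tendsto (fun j : ℕ => Real.log (C j) / (d * j) ^ α) atTop (nhds 1) →
        ∃ M : ℝ, 0 ≤ M ∧ ∀ j : ℕ, Real.log (C j) ≤ M + (1+ε) * (d * j) ^ α := by
      intro d hd C hC hCs
      have h1 : ∀ᶠ j : ℕ in atTop, Real.log (C j) / (d*(j:ℝ))^α < 1 + ε :=
        hCs.eventually (eventually_lt_nhds (by linarith))
      obtain ⟨N, hN⟩ := eventually_atTop.mp h1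
      set N' := max N 1 with hN'def
      have hne : (Finset.range N').Nonempty :=
        ⟨0, Finset.mem_range.mpr (lt_of_lt_of_le one_pos (le_max_right N 1))⟩
      set M := max 0 ((Finset.range N').sup' hne fun j => Real.log (C j)) with hMdef
      refine ⟨M, le_max_left _ _, ?_⟩
      intro j
      by_cases hj : j < N'
      · have h2 : Real.log (C j) ≤ (Finset.range N').sup' hne fun j => Real.log (C j) :=
          Finset.le_sup' (fun j => Real.log (C j)) (Finset.mem_range.mpr hj)
        have h3 : (0:ℝ) ≤ (1+ε)*(d*(j:ℝ))^α := by positivity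
        have h4 : Real.log (C j) ≤ M := le_trans h2 (le_max_right _ _)
        linarith
      · push_neg at hj
        have hjN : N ≤ j := le_trans (le_max_left N 1) hj
        have hj1 : 1 ≤ j := le_trans (le_max_right N 1) hj
        have hj0 : (0:ℝ) < j := by exact_mod_cast hj1
        have hD : (0:ℝ) < (d*(j:ℝ))^α := by positivity
        have h5 := hN j hjN
        rw [div_lt_iff₀ hD] at h5
        have hM0 : (0:ℝ) ≤ M := le_max_left _ _
        linarith
    obtain ⟨MA, hMA0, hMA⟩ := hbnd a ha A hA hAs
    obtain ⟨MB, hMB0, hMB⟩ := hbnd b hb B hB hBs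
    have hATop : Tendsto (fun n : ℕ => (c*(n:ℝ))^α) atTop atTop :=
      (tendsto_rpow_atTop hα0).comp ((tendsto_natCast_atTop_atTop).const_mul_atTop hc)
    have hgK : Tendsto (fun n : ℕ => (MA+MB) / (c*(n:ℝ))^α) atTop (nhds 0) :=
      tendsto_const_nhds.div_atTop hATop
    have hglog : Tendsto (fun n : ℕ => Real.log ((n:ℝ)+1) / (c*(n:ℝ))^α) atTop (nhds 0) := by
      have hf1 : Tendsto (fun n : ℕ => Real.log ((n:ℝ)+1) / ((n:ℝ)+1)^α) atTop (nhds 0) :=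
        ((isLittleO_log_rpow_atTop hα0).tendsto_div_nhds_zero).comp
          (tendsto_atTop_add_const_right atTop 1 tendsto_natCast_atTop_atTop)
      have hf2 : Tendsto (fun n : ℕ => (((n:ℝ)+1)/(c*(n:ℝ)))^α) atTop (nhds ((1/c)^α)) := by
        have hq : Tendsto (fun n : ℕ => ((n:ℝ)+1)/(c*(n:ℝ))) atTop (nhds (1/c)) := by
          have h3 : Tendsto (fun n : ℕ => (1 + 1/(n:ℝ)) * (1/c)) atTop (nhds (1/c)) := by
            have h4 := ((tendsto_const_nhds : Tendsto (fun _ : ℕ => (1:ℝ)) atTop (nhds 1)).add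
              tendsto_one_div_atTop_nhds_zero_nat).mul_const (1/c)
            simpa using h4
          apply h3.congr'
          filter_upwards [eventually_ge_atTop 1] with n hn
          have hn0 : (n:ℝ) ≠ 0 := by
            have : (0:ℝ) < n := by exact_mod_cast hn
            exact this.ne'
          field_simp
          try ring
          try simp
        exact hq.rpow_const (Or.inr hα0.le)
      have hmul := hf1.mul hf2
      rw [zero_mul] at hmul
      apply hmul.congr'
      filter_upwards [eventually_ge_atTop 1] with n hn
      have hn0 : (0:ℝ) < n := by exact_mod_cast hn
      have e : (((n:ℝ)+1)/(c*(n:ℝ)))^α = ((n:ℝ)+1)^α/(c*(n:ℝ))^α :=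
        Real.div_rpow (by positivity) (by positivity) α
      rw [e]
      have h1 : ((n:ℝ)+1)^α ≠ 0 := by positivity
      have h2 : (c*(n:ℝ))^α ≠ 0 := by positivity
      field_simp
    have hgev : ∀ᶠ n : ℕ in atTop,
        (Real.log ((n:ℝ)+1) + (MA+MB))/(c*(n:ℝ))^α < ε := by
      have h0 := hglog.add hgK
      rw [add_zero] at h0
      filter_upwards [h0.eventually (eventually_lt_nhds hε)] with n hn
      rw [add_div]
      exact hn
    filter_upwards [hgev, eventually_ge_atTop 1] with n hgn hn1
    have hn0 : (0:ℝ) < n := by exact_mod_cast hn1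
    have hD : (0:ℝ) < (c*(n:ℝ))^α := by positivity
    have hterm : ∀ i ∈ Finset.range (n+1),
        A i * B (n-i) ≤ Real.exp (MA + MB + (1+ε)*(c*(n:ℝ))^α) := by
      intro i hi
      have hi' : i ≤ n := Nat.lt_succ_iff.mp (Finset.mem_range.mp hi)
      have hxy : ((i:ℝ)) + ((n-i:ℕ):ℝ) = (n:ℝ) := by
        rw [Nat.cast_sub hi']; ring
      have h1 := hMA i
      have h2 := hMB (n-i)
      have h3 := hkey (i:ℝ) ((n-i:ℕ):ℝ) (Nat.cast_nonneg _) (Nat.cast_nonneg _)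
      rw [hxy] at h3
      have h4 : (1+ε)*((a*(i:ℝ))^α + (b*((n-i:ℕ):ℝ))^α) ≤ (1+ε)*(c*(n:ℝ))^α :=
        mul_le_mul_of_nonneg_left h3 (by linarith)
      rw [mul_add] at h4
      have h5 : Real.log (A i * B (n-i)) ≤ MA + MB + (1+ε)*(c*(n:ℝ))^α := by
        rw [Real.log_mul (hA i).ne' (hB _).ne']
        linarith
      calc A i * B (n-i) = Real.exp (Real.log (A i * B (n-i))) :=
            (Real.exp_log (mul_pos (hA i) (hB _))).symm
        _ ≤ _ := Real.exp_le_exp.mpr h5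
    have hsum : P n ≤ ((n:ℝ)+1) * Real.exp (MA + MB + (1+ε)*(c*(n:ℝ))^α) := by
      have hs2 := Finset.sum_le_card_nsmul (Finset.range (n+1)) _ _ hterm
      rw [Finset.card_range, nsmul_eq_mul] at hs2
      calc P n ≤ ((n+1 : ℕ):ℝ) * Real.exp (MA + MB + (1+ε)*(c*(n:ℝ))^α) := hs2
        _ = _ := by push_cast; ring
    have hlogP : Real.log (P n) ≤
        Real.log ((n:ℝ)+1) + (MA + MB + (1+ε)*(c*(n:ℝ))^α) := by
      calc Real.log (P n)
          ≤ Real.log (((n:ℝ)+1) * Real.exp (MA + MB + (1+ε)*(c*(n:ℝ))^α)) :=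
            Real.log_le_log (hP n) hsum
        _ = _ := by rw [Real.log_mul (by positivity) (Real.exp_ne_zero _), Real.log_exp]
    have hfinal : Real.log (P n) / (c*(n:ℝ))^α ≤
        (Real.log ((n:ℝ)+1) + (MA+MB))/(c*(n:ℝ))^α + (1+ε) := by
      calc Real.log (P n) / (c*(n:ℝ))^α
          ≤ ((Real.log ((n:ℝ)+1) + (MA+MB)) + (1+ε)*(c*(n:ℝ))^α)/(c*(n:ℝ))^α :=
            (div_le_div_iff_of_pos_right hD).mpr (by linarith)
        _ = _ := by rw [add_div, mul_div_assoc, div_self hD.ne', mul_one]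
    linarith
  rw [tendsto_order]
  constructor
  · intro u hu
    filter_upwards [hlow, hLB.eventually (eventually_gt_nhds hu)] with n h1 h2
    exact lt_of_lt_of_le h2 h1
  · intro u hu
    have hε : 0 < (u-1)/2 := by linarith
    filter_upwards [hupper ((u-1)/2) hε] with n hn
    calc Real.log (P n) / (c*(n:ℝ))^α < 1 + 2*((u-1)/2) := hn
      _ = u := by ring
end
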